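/- For any finite family of commutative rings R₁, ..., Rₙ, the weak Gorenstein global dimension of the product ring satisfies wGgldim(∏ᵢ Rᵢ) = sup{wGgldim(Rᵢ) : 1 ≤ i ≤ n}. -/

import Mathlib

open TensorProduct

universe u

section NCTensor
variable (R : Type u) [Ring R]

/-- Generators of the defect submodule used to define the tensor product of a right
`R`-module `N` and a left `R`-module `M` over a (possibly noncommutative) ring `R`. -/
def NCRel (N M : Type u) [AddCommGroup N] [Module Rᵐᵒᵖ N] [AddCommGroup M] [Module R M] :
    Submodule ℤ (N ⊗[ℤ] M) :=
  Submodule.span ℤ { t | ∃ (n : N) (r : R) (m : M),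
    t = (MulOpposite.op r • n) ⊗ₜ[ℤ] m - n ⊗ₜ[ℤ] (r • m) }

/-- The tensor product `N ⊗_R M` of a right `R`-module and a left `R`-module, as an
abelian group. -/
def NCTensor (N M : Type u) [AddCommGroup N] [Module Rᵐᵒᵖ N] [AddCommGroup M] [Module R M] :
    Type u :=
  (N ⊗[ℤ] M) ⧸ NCRel R N M

noncomputable instance (N M : Type u) [AddCommGroup N] [Module Rᵐᵒᵖ N] [AddCommGroup M] [Module R M] :
    AddCommGroup (NCTensor R N M) :=
  inferInstanceAs (AddCommGroup ((N ⊗[ℤ] M) ⧸ NCRel R N M))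

noncomputable instance (N M : Type u) [AddCommGroup N] [Module Rᵐᵒᵖ N] [AddCommGroup M] [Module R M] :
    Module ℤ (NCTensor R N M) :=
  inferInstanceAs (Module ℤ ((N ⊗[ℤ] M) ⧸ NCRel R N M))

/-- The map `I ⊗_R M → I ⊗_R M'` induced by a map `M →ₗ[R] M'` of left modules. -/
noncomputable def NCmap (N : Type u) [AddCommGroup N] [Module Rᵐᵒᵖ N] {M M' : Type u} [AddCommGroup M]
    [Module R M] [AddCommGroup M'] [Module R M'] (f : M →ₗ[R] M') :
    NCTensor R N M →ₗ[ℤ] NCTensor R N M' :=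
  Submodule.mapQ _ _ (LinearMap.lTensor N (f.restrictScalars ℤ)) <| by
    rw [NCRel, Submodule.span_le]
    rintro t ⟨n, r, m, rfl⟩
    refine Submodule.mem_comap.mpr (Submodule.subset_span ?_)
    refine ⟨n, r, f m, ?_⟩
    have h : LinearMap.lTensor N (f.restrictScalars ℤ)
        ((MulOpposite.op r • n) ⊗ₜ[ℤ] m - n ⊗ₜ[ℤ] (r • m)) =
        (MulOpposite.op r • n) ⊗ₜ[ℤ] f m - n ⊗ₜ[ℤ] (r • f m) := by
      simp [LinearMap.lTensor_tmul, map_sub, LinearMap.map_smul]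
    exact h

/-- The map `N ⊗_R M → N' ⊗_R M` induced by a map `N →ₗ[Rᵐᵒᵖ] N'` of right modules. -/
noncomputable def NCmapL (R : Type u) [Ring R] {N N' : Type u} [AddCommGroup N]
    [Module Rᵐᵒᵖ N] [AddCommGroup N'] [Module Rᵐᵒᵖ N'] (M : Type u) [AddCommGroup M]
    [Module R M] (f : N →ₗ[Rᵐᵒᵖ] N') :
    NCTensor R N M →ₗ[ℤ] NCTensor R N' M :=
  Submodule.mapQ _ _ (LinearMap.rTensor M f.toAddMonoidHom.toIntLinearMap) <| by
    rw [NCRel, Submodule.span_le]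
    rintro t ⟨n, r, m, rfl⟩
    refine Submodule.mem_comap.mpr (Submodule.subset_span ?_)
    refine ⟨f n, r, m, ?_⟩
    have h : LinearMap.rTensor M f.toAddMonoidHom.toIntLinearMap
        ((MulOpposite.op r • n) ⊗ₜ[ℤ] m - n ⊗ₜ[ℤ] (r • m)) =
        (MulOpposite.op r • f n) ⊗ₜ[ℤ] m - f n ⊗ₜ[ℤ] (r • m) := by
      simp [LinearMap.rTensor_tmul, map_sub, LinearMap.map_smul]
    exact h

/-- A left `R`-module `M` (over a possibly noncommutative ring) is flat if tensoring with
`M` preserves injectivity of maps of right `R`-modules. -/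
def FlatModule (R : Type u) [Ring R] (M : Type u) [AddCommGroup M] [Module R M] : Prop :=
  ∀ (N N' : Type u) [AddCommGroup N] [Module Rᵐᵒᵖ N] [AddCommGroup N'] [Module Rᵐᵒᵖ N']
    (f : N →ₗ[Rᵐᵒᵖ] N'), Function.Injective f → Function.Injective (NCmapL R M f)

end NCTensor
section GDefs
variable (R : Type u) [Ring R]

/-- A complete flat resolution witnessing that `M` is a Gorenstein flat left `R`-module:
an exact sequence `⋯ → F₂ → F₁ → F₀ → F₋₁ → ⋯` of flat left `R`-modules with
`M ≅ Im(F₀ → F₋₁)` which stays exact after applying `I ⊗_R -` for every injective right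
`R`-module `I`. -/
structure CompleteFlatResolution (M : Type u) [AddCommGroup M] [Module R M] :
    Type (u + 1) where
  F : ℤ → ModuleCat.{u} R
  d : ∀ z : ℤ, F (z + 1) →ₗ[R] F z
  flat : ∀ z, FlatModule R (F z)
  exact : ∀ z, Function.Exact (d (z + 1)) (d z)
  iso : Nonempty (M ≃ₗ[R] LinearMap.range (d (-1)))
  tensorExact : ∀ (I : Type u) [AddCommGroup I] [Module Rᵐᵒᵖ I], Module.Injective Rᵐᵒᵖ I →
    ∀ z, Function.Exact (NCmap R I (d (z + 1))) (NCmap R I (d z))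

/-- A left `R`-module is Gorenstein flat if it admits a complete flat resolution. -/
def IsGorensteinFlat (M : Type u) [AddCommGroup M] [Module R M] : Prop :=
  Nonempty (CompleteFlatResolution R M)

/-- A complete projective resolution witnessing that `M` is a Gorenstein projective left
`R`-module. -/
structure CompleteProjResolution (M : Type u) [AddCommGroup M] [Module R M] :
    Type (u + 1) where
  P : ℤ → ModuleCat.{u} R
  d : ∀ z : ℤ, P (z + 1) →ₗ[R] P z
  proj : ∀ z, Module.Projective R (P z)
  exact : ∀ z, Function.Exact (d (z + 1)) (d z)
  iso : Nonempty (M ≃ₗ[R] LinearMap.range (d (-1)))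
  homExact : ∀ (Q : Type u) [AddCommGroup Q] [Module R Q], Module.Projective R Q →
    ∀ z, Function.Exact (fun g : P z →ₗ[R] Q => g.comp (d z))
      (fun g : P (z + 1) →ₗ[R] Q => g.comp (d (z + 1)))

/-- A left `R`-module is Gorenstein projective if it admits a complete projective
resolution. -/
def IsGorensteinProjective (M : Type u) [AddCommGroup M] [Module R M] : Prop :=
  Nonempty (CompleteProjResolution R M)

/-- `gfdLE R n M` : the Gorenstein flat dimension of the left `R`-module `M` is at most
`n`, i.e. `M` has a resolution of length `n` by Gorenstein flat modules. -/
def gfdLE : ℕ → ModuleCat.{u} R → Prop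
  | 0, M => IsGorensteinFlat R M
  | n + 1, M => ∃ (G : ModuleCat.{u} R) (f : G →ₗ[R] M), Function.Surjective f ∧
      IsGorensteinFlat R G ∧ gfdLE n (ModuleCat.of R (LinearMap.ker f))

/-- `gpdLE R n M` : the Gorenstein projective dimension of `M` is at most `n`. -/
def gpdLE : ℕ → ModuleCat.{u} R → Prop
  | 0, M => IsGorensteinProjective R M
  | n + 1, M => ∃ (G : ModuleCat.{u} R) (f : G →ₗ[R] M), Function.Surjective f ∧
      IsGorensteinProjective R G ∧ gpdLE n (ModuleCat.of R (LinearMap.ker f))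

/-- `fdLE R n M` : the flat dimension of `M` is at most `n`. -/
def fdLE : ℕ → ModuleCat.{u} R → Prop
  | 0, M => FlatModule R M
  | n + 1, M => ∃ (G : ModuleCat.{u} R) (f : G →ₗ[R] M), Function.Surjective f ∧
      FlatModule R G ∧ fdLE n (ModuleCat.of R (LinearMap.ker f))

/-- `pdLE R n M` : the projective dimension of `M` is at most `n`. -/
def pdLE : ℕ → ModuleCat.{u} R → Prop
  | 0, M => Module.Projective R M
  | n + 1, M => ∃ (G : ModuleCat.{u} R) (f : G →ₗ[R] M), Function.Surjective f ∧
      Module.Projective R G ∧ pdLE n (ModuleCat.of R (LinearMap.ker f))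

/-- `idLE R n M` : the injective dimension of `M` is at most `n`. -/
def idLE : ℕ → ModuleCat.{u} R → Prop
  | 0, M => Module.Injective R M
  | n + 1, M => ∃ (I : ModuleCat.{u} R) (f : M →ₗ[R] I), Function.Injective f ∧
      Module.Injective R I ∧ idLE n (ModuleCat.of R (I ⧸ LinearMap.range f))

/-- Gorenstein flat dimension, valued in `ℕ∞`. -/
noncomputable def gfDim (M : ModuleCat.{u} R) : ℕ∞ :=
  sInf {n : ℕ∞ | ∃ k : ℕ, n = k ∧ gfdLE R k M}

/-- Flat dimension, valued in `ℕ∞`. -/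
noncomputable def flatDim (M : ModuleCat.{u} R) : ℕ∞ :=
  sInf {n : ℕ∞ | ∃ k : ℕ, n = k ∧ fdLE R k M}

/-- Injective dimension, valued in `ℕ∞`. -/
noncomputable def injDim (M : ModuleCat.{u} R) : ℕ∞ :=
  sInf {n : ℕ∞ | ∃ k : ℕ, n = k ∧ idLE R k M}

/-- The (left) weak Gorenstein global dimension of `R`:
the supremum of Gorenstein flat dimensions of all left `R`-modules. -/
noncomputable def wGgldim : ℕ∞ :=
  ⨆ M : ModuleCat.{u} R, gfDim R M

/-- `IFD R` : the supremum of flat dimensions of injective left `R`-modules. -/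
noncomputable def IFD : ℕ∞ :=
  ⨆ M : ModuleCat.{u} R, ⨆ (_ : Module.Injective R M), flatDim R M

/-- A ring is left coherent if every finitely generated left ideal is finitely
presented. -/
def LeftCoherent : Prop :=
  ∀ I : Submodule R R, I.FG → Module.FinitePresentation R I

/-- A ring is right coherent if every finitely generated right ideal is finitely
presented; right ideals are viewed as left ideals of `Rᵐᵒᵖ`. -/
def RightCoherent : Prop := LeftCoherent Rᵐᵒᵖ

end GDefs

/-- `TorVanishGT R n I M` : `Tor_i^R(I, M) = 0` for all `i > n`, expressed by saying that
for every projective resolution `P• → M` of left modules, the complex `I ⊗_R P•` obtained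
by tensoring with the right module `I` is exact at every spot of index `> n`. -/
noncomputable def TorVanishGT (R : Type u) [Ring R] (n : ℕ) (I : Type u) [AddCommGroup I]
    [Module Rᵐᵒᵖ I] (M : ModuleCat.{u} R) : Prop :=
  ∀ (P : ℕ → ModuleCat.{u} R) (d : ∀ i, P (i + 1) →ₗ[R] P i) (ε : P 0 →ₗ[R] M),
    (∀ i, Module.Projective R (P i)) → Function.Surjective ε →
    Function.Exact (d 0) ε → (∀ i, Function.Exact (d (i + 1)) (d i)) →
    ∀ j, n ≤ j → Function.Exact (NCmap R I (d (j + 1))) (NCmap R I (d j))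
section Infra
variable {R : Type u} [Ring R]

/-- mk for NCTensor -/
noncomputable def NCT.mk (N M : Type u) [AddCommGroup N] [Module Rᵐᵒᵖ N] [AddCommGroup M]
    [Module R M] : (N ⊗[ℤ] M) →ₗ[ℤ] NCTensor R N M := (NCRel R N M).mkQ

lemma NCT.mk_surjective (N M : Type u) [AddCommGroup N] [Module Rᵐᵒᵖ N] [AddCommGroup M]
    [Module R M] : Function.Surjective (NCT.mk (R := R) N M) :=
  Submodule.mkQ_surjective _

lemma NCT.ind {N M : Type u} [AddCommGroup N] [Module Rᵐᵒᵖ N] [AddCommGroup M]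
    [Module R M] {p : NCTensor R N M → Prop}
    (h0 : p 0) (htmul : ∀ (n : N) (m : M), p (NCT.mk N M (n ⊗ₜ[ℤ] m)))
    (hadd : ∀ x y, p x → p y → p (x + y)) : ∀ x, p x := by
  intro x
  obtain ⟨t, rfl⟩ := NCT.mk_surjective N M x
  induction t using TensorProduct.induction_on with
  | zero => simpa using h0
  | tmul n m => exact htmul n m
  | add a b ha hb => rw [map_add]; exact hadd _ _ ha hb

lemma NCmap_mk {N : Type u} [AddCommGroup N] [Module Rᵐᵒᵖ N] {M M' : Type u} [AddCommGroup M]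
    [Module R M] [AddCommGroup M'] [Module R M'] (f : M →ₗ[R] M') (n : N) (m : M) :
    NCmap R N f (NCT.mk N M (n ⊗ₜ[ℤ] m)) = NCT.mk N M' (n ⊗ₜ[ℤ] f m) := rfl

lemma NCmapL_mk {N N' : Type u} [AddCommGroup N] [Module Rᵐᵒᵖ N] [AddCommGroup N']
    [Module Rᵐᵒᵖ N'] (M : Type u) [AddCommGroup M] [Module R M] (f : N →ₗ[Rᵐᵒᵖ] N')
    (n : N) (m : M) :
    NCmapL R M f (NCT.mk N M (n ⊗ₜ[ℤ] m)) = NCT.mk N' M (f n ⊗ₜ[ℤ] m) := rfl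

lemma NCT.subsingleton_right (N M : Type u) [AddCommGroup N] [Module Rᵐᵒᵖ N] [AddCommGroup M]
    [Module R M] [Subsingleton M] : Subsingleton (NCTensor R N M) := by
  have : Subsingleton (N ⊗[ℤ] M) := by
    constructor
    have : ∀ x : N ⊗[ℤ] M, x = 0 := by
      intro x
      induction x using TensorProduct.induction_on with
      | zero => rfl
      | tmul n m => rw [Subsingleton.elim m 0, TensorProduct.tmul_zero]
      | add a b ha hb => rw [ha, hb, add_zero]
    intro a b; rw [this a, this b]
  exact (Submodule.Quotient.mk_surjective _).subsingleton

/-- relation in NCTensor -/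
lemma NCT.rel {N M : Type u} [AddCommGroup N] [Module Rᵐᵒᵖ N] [AddCommGroup M]
    [Module R M] (n : N) (r : R) (m : M) :
    NCT.mk (R := R) N M ((MulOpposite.op r • n) ⊗ₜ[ℤ] m) = NCT.mk (R := R) N M (n ⊗ₜ[ℤ] (r • m)) := by
  rw [← sub_eq_zero, ← map_sub]
  exact (Submodule.Quotient.mk_eq_zero _).2 (Submodule.subset_span ⟨n, r, m, rfl⟩)

/-- lift a ℤ-bilinear map killing the relations -/
noncomputable def NCT.lift {N M T : Type u} [AddCommGroup N] [Module Rᵐᵒᵖ N] [AddCommGroup M]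
    [Module R M] [AddCommGroup T] (b : N →ₗ[ℤ] M →ₗ[ℤ] T)
    (hb : ∀ (n : N) (r : R) (m : M), b (MulOpposite.op r • n) m = b n (r • m)) :
    NCTensor R N M →ₗ[ℤ] T :=
  Submodule.liftQ _ (TensorProduct.lift b) <| by
    rw [NCRel, Submodule.span_le]
    rintro t ⟨n, r, m, rfl⟩
    refine LinearMap.mem_ker.2 ?_
    erw [map_sub, TensorProduct.lift.tmul, TensorProduct.lift.tmul, hb n r m, sub_self]

@[simp] lemma NCT.lift_mk {N M T : Type u} [AddCommGroup N] [Module Rᵐᵒᵖ N] [AddCommGroup M]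
    [Module R M] [AddCommGroup T] (b : N →ₗ[ℤ] M →ₗ[ℤ] T)
    (hb : ∀ (n : N) (r : R) (m : M), b (MulOpposite.op r • n) m = b n (r • m))
    (n : N) (m : M) : NCT.lift b hb (NCT.mk N M (n ⊗ₜ[ℤ] m)) = b n m := rfl

lemma Function.Exact.of_ladder_addEquiv' {A B C A' B' C' : Type*}
    [AddCommGroup A] [AddCommGroup B] [AddCommGroup C]
    [AddCommGroup A'] [AddCommGroup B'] [AddCommGroup C']
    {f : A → B} {g : B → C} {f' : A' → B'} {g' : B' → C'}
    (eA : A ≃+ A') (eB : B ≃+ B') (eC : C ≃+ C')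
    (hf : ∀ a, f' (eA a) = eB (f a)) (hg : ∀ b, g' (eB b) = eC (g b))
    (h : Function.Exact f g) : Function.Exact f' g' := by
  intro b'
  obtain ⟨b, rfl⟩ := eB.surjective b'
  rw [hg b]
  constructor
  · intro hb
    have : g b = 0 := by
      apply eC.injective; rw [hb, map_zero]
    obtain ⟨a, ha⟩ := (h b).1 this
    exact ⟨eA a, by rw [hf, ha]⟩
  · rintro ⟨a', ha'⟩
    obtain ⟨a, rfl⟩ := eA.surjective a'
    rw [hf] at ha'
    have : f a = b := eB.injective ha'
    rw [(h b).2 ⟨a, this⟩, map_zero]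

/-- linear equiv between subsingleton modules -/
noncomputable def LinearEquiv.ofSubsingletons (R : Type u) [Ring R] {M M' : Type*} [AddCommGroup M] [AddCommGroup M']
    [Module R M] [Module R M'] [Subsingleton M] [Subsingleton M'] : M ≃ₗ[R] M' where
  toFun _ := 0
  invFun _ := 0
  map_add' _ _ := by simp
  map_smul' _ _ := by simp
  left_inv x := Subsingleton.elim _ _
  right_inv x := Subsingleton.elim _ _

end Infra
section ProdRing
variable {m : ℕ} {R : Fin m → Type u} [∀ i, CommRing (R i)]

/-- the idempotent supported at `i` -/
def eP (R : Fin m → Type u) [∀ i, CommRing (R i)] (i : Fin m) : ∀ j, R j := Pi.single i 1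

lemma eP_mul (i : Fin m) (s : ∀ j, R j) : eP R i * s = Pi.single i (s i) := by
  funext j
  by_cases h : j = i
  · subst h; simp [eP, Pi.mul_apply]
  · simp [eP, Pi.mul_apply, Pi.single_eq_of_ne h]

lemma mul_eP (i : Fin m) (s : ∀ j, R j) : s * eP R i = Pi.single i (s i) := by
  rw [mul_comm, eP_mul]

lemma single_mul_single (i : Fin m) (r r' : R i) :
    (Pi.single i r : ∀ j, R j) * Pi.single i r' = Pi.single i (r * r') := by
  funext j
  by_cases h : j = i
  · subst h; simp [Pi.mul_apply]
  · simp [Pi.mul_apply, Pi.single_eq_of_ne h]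

lemma eP_mul_single (i : Fin m) (r : R i) :
    eP R i * (Pi.single i r : ∀ j, R j) = Pi.single i r := by
  rw [eP_mul, Pi.single_eq_same]

lemma single_mul_eP (i : Fin m) (r : R i) :
    (Pi.single i r : ∀ j, R j) * eP R i = Pi.single i r := by
  rw [mul_eP, Pi.single_eq_same]

lemma eP_mul_eP (i : Fin m) : eP R i * eP R i = eP R i := eP_mul_single i 1

lemma sum_eP : ∑ i, eP R i = 1 := by
  funext j
  rw [Finset.sum_apply]
  simp [eP, Pi.single_apply]

/-! ### `Up`: an `R i`-module viewed as a module over the product ring -/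

def Up (R : Fin m → Type u) [∀ i, CommRing (R i)] (i : Fin m) (A : Type u) : Type u := A

instance Up.addCommGroup (i : Fin m) (A : Type u) [AddCommGroup A] :
    AddCommGroup (Up R i A) := inferInstanceAs (AddCommGroup A)

instance Up.module (i : Fin m) (A : Type u) [AddCommGroup A] [Module (R i) A] :
    Module (∀ j, R j) (Up R i A) := Module.compHom A (Pi.evalRingHom R i)

/-- the action of `R i` on `Up R i A` -/
instance Up.module' (i : Fin m) (A : Type u) [AddCommGroup A] [Module (R i) A] :
    Module (R i) (Up R i A) := inferInstanceAs (Module (R i) A)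

/-- identity into `Up` -/
def Up.mk (i : Fin m) {A : Type u} (a : A) : Up R i A := a

/-- identity out of `Up` -/
def Up.out (i : Fin m) {A : Type u} (a : Up R i A) : A := a

lemma Up.smul_eq (i : Fin m) {A : Type u} [AddCommGroup A] [Module (R i) A]
    (s : ∀ j, R j) (a : Up R i A) : s • a = s i • a := rfl

/-- `Up` of a linear map. -/
def UpMap (i : Fin m) {A B : Type u} [AddCommGroup A] [Module (R i) A] [AddCommGroup B]
    [Module (R i) B] (f : A →ₗ[R i] B) : Up R i A →ₗ[∀ j, R j] Up R i B where
  toFun a := f a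
  map_add' := f.map_add
  map_smul' s a := f.map_smul (s i) a

@[simp] lemma UpMap_apply (i : Fin m) {A B : Type u} [AddCommGroup A] [Module (R i) A]
    [AddCommGroup B] [Module (R i) B] (f : A →ₗ[R i] B) (a : Up R i A) :
    UpMap i f a = f a := rfl

/-- `Up` of a linear equiv. -/
def UpEquiv (i : Fin m) {A B : Type u} [AddCommGroup A] [Module (R i) A] [AddCommGroup B]
    [Module (R i) B] (f : A ≃ₗ[R i] B) : Up R i A ≃ₗ[∀ j, R j] Up R i B where
  toFun a := f a
  invFun b := f.symm b
  map_add' := f.map_add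
  map_smul' s a := f.map_smul (s i) a
  left_inv := f.left_inv
  right_inv := f.right_inv

/-! ### `Up'`: right-module version -/

def Up' (R : Fin m → Type u) [∀ i, CommRing (R i)] (i : Fin m) (N : Type u) : Type u := N

instance Up'.addCommGroup (i : Fin m) (N : Type u) [AddCommGroup N] :
    AddCommGroup (Up' R i N) := inferInstanceAs (AddCommGroup N)

instance Up'.module (i : Fin m) (N : Type u) [AddCommGroup N] [Module (R i)ᵐᵒᵖ N] :
    Module (∀ j, R j)ᵐᵒᵖ (Up' R i N) := Module.compHom N (RingHom.op (Pi.evalRingHom R i))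

instance Up'.module' (i : Fin m) (N : Type u) [AddCommGroup N] [Module (R i)ᵐᵒᵖ N] :
    Module (R i)ᵐᵒᵖ (Up' R i N) := inferInstanceAs (Module (R i)ᵐᵒᵖ N)

def Up'.mk (i : Fin m) {A : Type u} (a : A) : Up' R i A := a

def Up'.out (i : Fin m) {A : Type u} (a : Up' R i A) : A := a

lemma Up'.smul_eq (i : Fin m) {N : Type u} [AddCommGroup N] [Module (R i)ᵐᵒᵖ N]
    (s : ∀ j, R j) (a : Up' R i N) :
    MulOpposite.op s • a = MulOpposite.op (s i) • a := rfl

def Up'Map (i : Fin m) {A B : Type u} [AddCommGroup A] [Module (R i)ᵐᵒᵖ A] [AddCommGroup B]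
    [Module (R i)ᵐᵒᵖ B] (f : A →ₗ[(R i)ᵐᵒᵖ] B) : Up' R i A →ₗ[(∀ j, R j)ᵐᵒᵖ] Up' R i B where
  toFun a := f a
  map_add' := f.map_add
  map_smul' s a := f.map_smul (MulOpposite.op (s.unop i)) a

@[simp] lemma Up'Map_apply (i : Fin m) {A B : Type u} [AddCommGroup A] [Module (R i)ᵐᵒᵖ A]
    [AddCommGroup B] [Module (R i)ᵐᵒᵖ B] (f : A →ₗ[(R i)ᵐᵒᵖ] B) (a : Up' R i A) :
    Up'Map i f a = f a := rfl

/-! ### `Dn`: the component at `i` of a module over the product ring -/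

/-- the submodule of elements fixed by `eP R i`. -/
def dnSub (R : Fin m → Type u) [∀ i, CommRing (R i)] (i : Fin m) (M : Type u) [AddCommGroup M]
    [Module (∀ j, R j) M] : Submodule (∀ j, R j) M where
  carrier := {x | eP R i • x = x}
  add_mem' := by intro a b ha hb; simp only [Set.mem_setOf_eq, smul_add] at *; rw [ha, hb]
  zero_mem' := smul_zero _
  smul_mem' := by
    intro s x hx
    simp only [Set.mem_setOf_eq] at *
    rw [smul_comm, hx]

def Dn (R : Fin m → Type u) [∀ i, CommRing (R i)] (i : Fin m) (M : Type u) [AddCommGroup M]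
    [Module (∀ j, R j) M] : Type u :=
  dnSub R i M

instance Dn.addCommGroup (i : Fin m) (M : Type u) [AddCommGroup M] [Module (∀ j, R j) M] :
    AddCommGroup (Dn R i M) := inferInstanceAs (AddCommGroup (dnSub R i M))

/-- value of an element of `Dn i M` in `M`. -/
def Dn.val {i : Fin m} {M : Type u} [AddCommGroup M] [Module (∀ j, R j) M] (x : Dn R i M) :
    M := Subtype.val (show dnSub R i M from x)

lemma Dn.ext {i : Fin m} {M : Type u} [AddCommGroup M] [Module (∀ j, R j) M]
    {x y : Dn R i M} (h : x.val = y.val) : x = y := Subtype.ext h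

@[simp] lemma Dn.val_add {i : Fin m} {M : Type u} [AddCommGroup M] [Module (∀ j, R j) M]
    (x y : Dn R i M) : (x + y).val = x.val + y.val := rfl

@[simp] lemma Dn.val_neg {i : Fin m} {M : Type u} [AddCommGroup M] [Module (∀ j, R j) M]
    (x : Dn R i M) : (-x).val = -x.val := rfl

@[simp] lemma Dn.val_zero {i : Fin m} {M : Type u} [AddCommGroup M] [Module (∀ j, R j) M] :
    (0 : Dn R i M).val = 0 := rfl

def Dn.mk {i : Fin m} {M : Type u} [AddCommGroup M] [Module (∀ j, R j) M] (x : M)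
    (hx : eP R i • x = x) : Dn R i M := show dnSub R i M from ⟨x, hx⟩

@[simp] lemma Dn.val_mk {i : Fin m} {M : Type u} [AddCommGroup M] [Module (∀ j, R j) M] (x : M)
    (hx : eP R i • x = x) : (Dn.mk x hx).val = x := rfl

lemma Dn.fix {i : Fin m} {M : Type u} [AddCommGroup M] [Module (∀ j, R j) M] (x : Dn R i M) :
    eP R i • x.val = x.val := Subtype.prop (show dnSub R i M from x)

/-- `e i • x` always lies in `Dn i M`. -/
def Dn.proj (i : Fin m) {M : Type u} [AddCommGroup M] [Module (∀ j, R j) M] (x : M) :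
    Dn R i M :=
  Dn.mk (eP R i • x) (by rw [smul_smul, eP_mul_eP])

@[simp] lemma Dn.val_proj (i : Fin m) {M : Type u} [AddCommGroup M] [Module (∀ j, R j) M]
    (x : M) : (Dn.proj (R := R) i x).val = eP R i • x := rfl

instance Dn.smul (i : Fin m) (M : Type u) [AddCommGroup M] [Module (∀ j, R j) M] :
    SMul (R i) (Dn R i M) :=
  ⟨fun r x => Dn.mk ((Pi.single i r : ∀ j, R j) • x.val)
    (by rw [smul_smul, eP_mul_single])⟩

@[simp] lemma Dn.val_smul {i : Fin m} {M : Type u} [AddCommGroup M] [Module (∀ j, R j) M]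
    (r : R i) (x : Dn R i M) : (r • x).val = (Pi.single i r : ∀ j, R j) • x.val := rfl

instance Dn.module (i : Fin m) (M : Type u) [AddCommGroup M] [Module (∀ j, R j) M] :
    Module (R i) (Dn R i M) where
  one_smul x := Dn.ext (by rw [Dn.val_smul]; exact x.fix)
  mul_smul r r' x := Dn.ext (by
    simp only [Dn.val_smul]
    rw [smul_smul, single_mul_single])
  smul_zero r := Dn.ext (by simp)
  smul_add r x y := Dn.ext (by simp [smul_add])
  add_smul r r' x := Dn.ext (by
    simp only [Dn.val_smul]
    rw [Pi.single_add, add_smul]; rfl)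
  zero_smul x := Dn.ext (by
    simp only [Dn.val_smul]
    rw [Pi.single_zero, zero_smul]; rfl)

/-- `Dn` of a linear map. -/
def DnMap (i : Fin m) {M M' : Type u} [AddCommGroup M] [Module (∀ j, R j) M] [AddCommGroup M']
    [Module (∀ j, R j) M'] (f : M →ₗ[∀ j, R j] M') : Dn R i M →ₗ[R i] Dn R i M' where
  toFun x := Dn.mk (f x.val) (by rw [← map_smul, x.fix])
  map_add' x y := Dn.ext (by simp)
  map_smul' r x := Dn.ext (by simp [map_smul])

@[simp] lemma DnMap_val (i : Fin m) {M M' : Type u} [AddCommGroup M] [Module (∀ j, R j) M]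
    [AddCommGroup M'] [Module (∀ j, R j) M'] (f : M →ₗ[∀ j, R j] M') (x : Dn R i M) :
    (DnMap i f x).val = f x.val := rfl

/-- `Dn` of a linear equiv. -/
def DnEquiv (i : Fin m) {M M' : Type u} [AddCommGroup M] [Module (∀ j, R j) M] [AddCommGroup M']
    [Module (∀ j, R j) M'] (f : M ≃ₗ[∀ j, R j] M') : Dn R i M ≃ₗ[R i] Dn R i M' :=
  { DnMap i f.toLinearMap with
    invFun := fun y => DnMap i f.symm.toLinearMap y
    left_inv := fun x => Dn.ext (by simp)
    right_inv := fun y => Dn.ext (by simp) }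

end ProdRing
section ProdRing2
variable {m : ℕ} {R : Fin m → Type u} [∀ i, CommRing (R i)]

open MulOpposite in
/-- the `Sᵐᵒᵖ`-submodule of elements fixed by `op (eP R i)`. -/
def dnSub' (R : Fin m → Type u) [∀ i, CommRing (R i)] (i : Fin m) (N : Type u) [AddCommGroup N]
    [Module (∀ j, R j)ᵐᵒᵖ N] : Submodule (∀ j, R j)ᵐᵒᵖ N where
  carrier := {x | op (eP R i) • x = x}
  add_mem' := by intro a b ha hb; simp only [Set.mem_setOf_eq, smul_add] at *; rw [ha, hb]
  zero_mem' := smul_zero _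
  smul_mem' := by
    intro s x hx
    simp only [Set.mem_setOf_eq] at *
    rw [smul_comm, hx]

def Dn' (R : Fin m → Type u) [∀ i, CommRing (R i)] (i : Fin m) (N : Type u) [AddCommGroup N]
    [Module (∀ j, R j)ᵐᵒᵖ N] : Type u :=
  dnSub' R i N

instance Dn'.addCommGroup (i : Fin m) (N : Type u) [AddCommGroup N]
    [Module (∀ j, R j)ᵐᵒᵖ N] : AddCommGroup (Dn' R i N) :=
  inferInstanceAs (AddCommGroup (dnSub' R i N))

def Dn'.val {i : Fin m} {N : Type u} [AddCommGroup N] [Module (∀ j, R j)ᵐᵒᵖ N]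
    (x : Dn' R i N) : N := Subtype.val (show dnSub' R i N from x)

lemma Dn'.ext {i : Fin m} {N : Type u} [AddCommGroup N] [Module (∀ j, R j)ᵐᵒᵖ N]
    {x y : Dn' R i N} (h : x.val = y.val) : x = y := Subtype.ext h

@[simp] lemma Dn'.val_add {i : Fin m} {N : Type u} [AddCommGroup N] [Module (∀ j, R j)ᵐᵒᵖ N]
    (x y : Dn' R i N) : (x + y).val = x.val + y.val := rfl

@[simp] lemma Dn'.val_zero {i : Fin m} {N : Type u} [AddCommGroup N] [Module (∀ j, R j)ᵐᵒᵖ N] :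
    (0 : Dn' R i N).val = 0 := rfl

def Dn'.mk {i : Fin m} {N : Type u} [AddCommGroup N] [Module (∀ j, R j)ᵐᵒᵖ N] (x : N)
    (hx : MulOpposite.op (eP R i) • x = x) : Dn' R i N := show dnSub' R i N from ⟨x, hx⟩

@[simp] lemma Dn'.val_mk {i : Fin m} {N : Type u} [AddCommGroup N] [Module (∀ j, R j)ᵐᵒᵖ N]
    (x : N) (hx : MulOpposite.op (eP R i) • x = x) : (Dn'.mk x hx).val = x := rfl

lemma Dn'.fix {i : Fin m} {N : Type u} [AddCommGroup N] [Module (∀ j, R j)ᵐᵒᵖ N]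
    (x : Dn' R i N) : MulOpposite.op (eP R i) • x.val = x.val :=
  Subtype.prop (show dnSub' R i N from x)

open MulOpposite in
lemma opSmulOpSmul {N : Type u} [AddCommGroup N] {S : Type u} [CommRing S]
    [Module Sᵐᵒᵖ N] (a b : S) (x : N) : op a • op b • x = op (b * a) • x := by
  rw [smul_smul, ← MulOpposite.op_mul]

open MulOpposite in
def Dn'.proj (i : Fin m) {N : Type u} [AddCommGroup N] [Module (∀ j, R j)ᵐᵒᵖ N] (x : N) :
    Dn' R i N :=
  Dn'.mk (op (eP R i) • x) (by rw [opSmulOpSmul, eP_mul_eP])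

@[simp] lemma Dn'.val_proj (i : Fin m) {N : Type u} [AddCommGroup N] [Module (∀ j, R j)ᵐᵒᵖ N]
    (x : N) : (Dn'.proj (R := R) i x).val = MulOpposite.op (eP R i) • x := rfl

open MulOpposite in
instance Dn'.smul (i : Fin m) (N : Type u) [AddCommGroup N] [Module (∀ j, R j)ᵐᵒᵖ N] :
    SMul (R i)ᵐᵒᵖ (Dn' R i N) :=
  ⟨fun r x => Dn'.mk (op (Pi.single i r.unop : ∀ j, R j) • x.val)
    (by rw [opSmulOpSmul, single_mul_eP])⟩

@[simp] lemma Dn'.val_smul {i : Fin m} {N : Type u} [AddCommGroup N] [Module (∀ j, R j)ᵐᵒᵖ N]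
    (r : (R i)ᵐᵒᵖ) (x : Dn' R i N) :
    (r • x).val = MulOpposite.op (Pi.single i r.unop : ∀ j, R j) • x.val := rfl

open MulOpposite in
instance Dn'.module (i : Fin m) (N : Type u) [AddCommGroup N] [Module (∀ j, R j)ᵐᵒᵖ N] :
    Module (R i)ᵐᵒᵖ (Dn' R i N) where
  one_smul x := Dn'.ext (by rw [Dn'.val_smul]; exact x.fix)
  mul_smul r r' x := Dn'.ext (by
    simp only [Dn'.val_smul]
    rw [opSmulOpSmul, single_mul_single, MulOpposite.unop_mul, mul_comm])
  smul_zero r := Dn'.ext (by simp)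
  smul_add r x y := Dn'.ext (by simp [smul_add])
  add_smul r r' x := Dn'.ext (by
    simp only [Dn'.val_smul]
    rw [MulOpposite.unop_add, Pi.single_add, op_add, add_smul]; rfl)
  zero_smul x := Dn'.ext (by
    simp only [Dn'.val_smul]
    rw [MulOpposite.unop_zero, Pi.single_zero, op_zero, zero_smul]; rfl)

/-- `Dn'` of a linear map. -/
def Dn'Map (i : Fin m) {N N' : Type u} [AddCommGroup N] [Module (∀ j, R j)ᵐᵒᵖ N]
    [AddCommGroup N'] [Module (∀ j, R j)ᵐᵒᵖ N'] (f : N →ₗ[(∀ j, R j)ᵐᵒᵖ] N') :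
    Dn' R i N →ₗ[(R i)ᵐᵒᵖ] Dn' R i N' where
  toFun x := Dn'.mk (f x.val) (by rw [← map_smul, x.fix])
  map_add' x y := Dn'.ext (by simp)
  map_smul' r x := Dn'.ext (by simp [map_smul])

@[simp] lemma Dn'Map_val (i : Fin m) {N N' : Type u} [AddCommGroup N] [Module (∀ j, R j)ᵐᵒᵖ N]
    [AddCommGroup N'] [Module (∀ j, R j)ᵐᵒᵖ N'] (f : N →ₗ[(∀ j, R j)ᵐᵒᵖ] N') (x : Dn' R i N) :
    (Dn'Map i f x).val = f x.val := rfl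

lemma Dn'Map_injective (i : Fin m) {N N' : Type u} [AddCommGroup N] [Module (∀ j, R j)ᵐᵒᵖ N]
    [AddCommGroup N'] [Module (∀ j, R j)ᵐᵒᵖ N'] (f : N →ₗ[(∀ j, R j)ᵐᵒᵖ] N')
    (hf : Function.Injective f) : Function.Injective (Dn'Map i f) := by
  intro x y h
  exact Dn'.ext (hf (congrArg Dn'.val h))

lemma DnMap_injective (i : Fin m) {M M' : Type u} [AddCommGroup M] [Module (∀ j, R j) M]
    [AddCommGroup M'] [Module (∀ j, R j) M'] (f : M →ₗ[∀ j, R j] M')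
    (hf : Function.Injective f) : Function.Injective (DnMap i f) := by
  intro x y h
  exact Dn.ext (hf (congrArg Dn.val h))

lemma DnMap_surjective (i : Fin m) {M M' : Type u} [AddCommGroup M] [Module (∀ j, R j) M]
    [AddCommGroup M'] [Module (∀ j, R j) M'] (f : M →ₗ[∀ j, R j] M')
    (hf : Function.Surjective f) : Function.Surjective (DnMap i f) := by
  intro y
  obtain ⟨x, hx⟩ := hf y.val
  refine ⟨Dn.proj i x, Dn.ext ?_⟩
  rw [DnMap_val, Dn.val_proj, map_smul, hx, y.fix]

lemma DnMap_exact (i : Fin m) {M₁ M₂ M₃ : Type u} [AddCommGroup M₁] [Module (∀ j, R j) M₁]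
    [AddCommGroup M₂] [Module (∀ j, R j) M₂] [AddCommGroup M₃] [Module (∀ j, R j) M₃]
    (f : M₁ →ₗ[∀ j, R j] M₂) (g : M₂ →ₗ[∀ j, R j] M₃) (h : Function.Exact f g) :
    Function.Exact (DnMap i f) (DnMap i g) := by
  intro y
  constructor
  · intro hy
    have : g y.val = 0 := congrArg Dn.val hy
    obtain ⟨x, hx⟩ := (h y.val).1 this
    refine ⟨Dn.proj i x, Dn.ext ?_⟩
    rw [DnMap_val, Dn.val_proj, map_smul, hx, y.fix]
  · rintro ⟨x, rfl⟩
    refine Dn.ext ?_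
    show g (f x.val) = 0
    exact (h (f x.val)).2 ⟨x.val, rfl⟩

lemma exact_pi {ι : Type u} {A B C : ι → Type u}
    (f : ∀ i, A i → B i) (g : ∀ i, B i → C i) [∀ i, Zero (C i)]
    (h : ∀ i, Function.Exact (f i) (g i)) :
    Function.Exact (fun (v : ∀ i, A i) i => f i (v i)) (fun (v : ∀ i, B i) i => g i (v i)) := by
  intro v
  constructor
  · intro hv
    have : ∀ i, ∃ a, f i a = v i := by
      intro i
      exact (h i (v i)).1 (congrFun hv i)
    choose a ha using this
    exact ⟨a, funext ha⟩
  · rintro ⟨a, rfl⟩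
    funext i
    exact (h i _).2 ⟨a i, rfl⟩

end ProdRing2
section ProdRing3
variable {m : ℕ} {R : Fin m → Type u} [∀ i, CommRing (R i)]

lemma eP_apply_same (i : Fin m) : eP R i i = 1 := Pi.single_eq_same i 1

lemma eP_apply_ne {i j : Fin m} (h : j ≠ i) : eP R i j = 0 := Pi.single_eq_of_ne h 1

lemma eP_mul_eP_ne {i j : Fin m} (h : i ≠ j) : eP R i * eP R j = 0 := by
  funext k
  show eP R i k * eP R j k = 0
  by_cases hk : k = j
  · subst hk
    rw [eP_apply_ne (Ne.symm h), zero_mul]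
  · rw [eP_apply_ne hk, mul_zero]

/-- decomposition of a module over a product ring -/
noncomputable def decompose (M : Type u) [AddCommGroup M] [Module (∀ j, R j) M] :
    M ≃ₗ[∀ j, R j] ∀ i, Up R i (Dn R i M) where
  toFun x := fun i => Up.mk i (Dn.proj i x)
  invFun v := ∑ i, (Up.out i (v i)).val
  map_add' x y := funext fun i => Dn.ext (R := R) (smul_add (eP R i) x y)
  map_smul' s x := funext fun i => Dn.ext (R := R) (by
    show eP R i • (s • x) = (Pi.single i (s i) : ∀ j, R j) • (eP R i • x)
    rw [smul_smul, smul_smul, eP_mul, single_mul_eP])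
  left_inv x := by
    show ∑ i, (Dn.proj (R := R) i x).val = x
    simp only [Dn.val_proj]
    rw [← Finset.sum_smul, sum_eP, one_smul]
  right_inv v := by
    funext i
    refine Dn.ext (R := R) ?_
    show eP R i • (∑ j, (Up.out j (v j)).val) = (Up.out i (v i)).val
    rw [Finset.smul_sum, Finset.sum_eq_single i]
    · exact (Up.out i (v i)).fix
    · intro j _ hj
      rw [← (Up.out j (v j)).fix, smul_smul, eP_mul_eP_ne (Ne.symm hj), zero_smul]
    · intro h
      exact absurd (Finset.mem_univ i) h

/-- `Dn i (Up i A) ≃ A` -/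
noncomputable def upDnEquiv (i : Fin m) (A : Type u) [AddCommGroup A] [Module (R i) A] :
    Dn R i (Up R i A) ≃ₗ[R i] A where
  toFun x := Up.out i x.val
  invFun a := Dn.mk (Up.mk i a) (by
    rw [Up.smul_eq, eP_apply_same, one_smul])
  map_add' x y := rfl
  map_smul' r x := by
    show Up.out i ((Pi.single i r : ∀ j, R j) • x.val) = r • Up.out i x.val
    rw [show ((Pi.single i r : ∀ j, R j) • x.val : Up R i A)
        = ((Pi.single i r : ∀ j, R j) i) • x.val from rfl, Pi.single_eq_same]
    rfl
  left_inv x := Dn.ext rfl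
  right_inv a := rfl

lemma dnUp_subsingleton {i j : Fin m} (h : j ≠ i) (A : Type u) [AddCommGroup A]
    [Module (R i) A] : Subsingleton (Dn R j (Up R i A)) := by
  constructor
  intro x y
  have key : ∀ z : Dn R j (Up R i A), z.val = 0 := by
    intro z
    have hz := z.fix
    rw [Up.smul_eq, eP_apply_ne (Ne.symm h), zero_smul] at hz
    exact hz.symm
  exact Dn.ext (by rw [key x, key y])

/-- map on products of `Up`s -/
noncomputable def piUpMap {A B : Fin m → Type u} [∀ j, AddCommGroup (A j)]
    [∀ j, Module (R j) (A j)] [∀ j, AddCommGroup (B j)] [∀ j, Module (R j) (B j)]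
    (f : ∀ i, A i →ₗ[R i] B i) :
    (∀ j, Up R j (A j)) →ₗ[∀ j, R j] ∀ j, Up R j (B j) :=
  LinearMap.pi (fun i => (UpMap i (f i)).comp (LinearMap.proj i))

@[simp] lemma piUpMap_apply {A B : Fin m → Type u} [∀ j, AddCommGroup (A j)]
    [∀ j, Module (R j) (A j)] [∀ j, AddCommGroup (B j)] [∀ j, Module (R j) (B j)]
    (f : ∀ i, A i →ₗ[R i] B i) (v : ∀ j, Up R j (A j)) (i : Fin m) :
    piUpMap f v i = f i (v i) := rfl

lemma piUpMap_surjective {A B : Fin m → Type u} [∀ j, AddCommGroup (A j)]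
    [∀ j, Module (R j) (A j)] [∀ j, AddCommGroup (B j)] [∀ j, Module (R j) (B j)]
    (f : ∀ i, A i →ₗ[R i] B i) (hf : ∀ i, Function.Surjective (f i)) :
    Function.Surjective (piUpMap f) := by
  intro v
  have : ∀ i, ∃ a, f i a = v i := fun i => hf i (v i)
  choose a ha using this
  exact ⟨a, funext ha⟩

lemma smul_pi_single {A : Fin m → Type u} [∀ j, AddCommGroup (A j)]
    [∀ j, Module (R j) (A j)] (i : Fin m) (s : ∀ j, R j) (a : A i) :
    s • (Pi.single i (a : A i) : ∀ j, Up R j (A j)) = Pi.single i (s i • a) := by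
  funext j
  rw [show (s • (Pi.single i (a : A i) : ∀ j, Up R j (A j))) j
      = (s j) • (Pi.single i (a : A i) : ∀ j, Up R j (A j)) j from rfl]
  by_cases h : j = i
  · subst h
    erw [Pi.single_eq_same, Pi.single_eq_same]
    rfl
  · erw [Pi.single_eq_of_ne h, Pi.single_eq_of_ne h, smul_zero]
    rfl

lemma eP_smul_pi_single {A : Fin m → Type u} [∀ j, AddCommGroup (A j)]
    [∀ j, Module (R j) (A j)] (i : Fin m) (a : A i) :
    eP R i • (Pi.single i (a : A i) : ∀ j, Up R j (A j)) = Pi.single i a := by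
  rw [smul_pi_single, eP_apply_same, one_smul]

lemma dn_pi_val_ne {A : Fin m → Type u} [∀ j, AddCommGroup (A j)]
    [∀ j, Module (R j) (A j)] {i j : Fin m} (h : j ≠ i)
    (x : Dn R i (∀ k, Up R k (A k))) : x.val j = 0 := by
  have hx := congrFun x.fix j
  rw [show (eP R i • x.val) j = (eP R i j) • (x.val j) from rfl,
    eP_apply_ne h, zero_smul] at hx
  exact hx.symm

lemma dn_pi_val_eq_single {A : Fin m → Type u} [∀ j, AddCommGroup (A j)]
    [∀ j, Module (R j) (A j)] {i : Fin m} (x : Dn R i (∀ k, Up R k (A k))) :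
    x.val = Pi.single i (x.val i) := by
  funext j
  by_cases h : j = i
  · subst h; erw [Pi.single_eq_same]
  · erw [Pi.single_eq_of_ne h, dn_pi_val_ne h]
    rfl

/-- `Dn i (∏ j, Up j (A j)) ≃ A i` -/
noncomputable def piDnEquiv (A : Fin m → Type u) [∀ j, AddCommGroup (A j)]
    [∀ j, Module (R j) (A j)] (i : Fin m) :
    Dn R i (∀ j, Up R j (A j)) ≃ₗ[R i] A i where
  toFun x := Up.out i (x.val i)
  invFun a := Dn.mk (Pi.single i a) (eP_smul_pi_single i a)
  map_add' x y := rfl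
  map_smul' r x := by
    show Up.out i (((Pi.single i r : ∀ j, R j) • x.val) i) = r • Up.out i (x.val i)
    rw [show ((Pi.single i r : ∀ j, R j) • x.val) i
      = ((Pi.single i r : ∀ j, R j) i) • (x.val i) from rfl, Pi.single_eq_same]
    rfl
  left_inv x := Dn.ext (by erw [Dn.val_mk]; exact (dn_pi_val_eq_single x).symm)
  right_inv a := Pi.single_eq_same i a

/-- `Dn i (ker f) ≃ ker (DnMap i f)` -/
noncomputable def kerDnEquiv (i : Fin m) {M M' : Type u} [AddCommGroup M]
    [Module (∀ j, R j) M] [AddCommGroup M'] [Module (∀ j, R j) M']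
    (f : M →ₗ[∀ j, R j] M') :
    Dn R i (LinearMap.ker f) ≃ₗ[R i] LinearMap.ker (DnMap i f) where
  toFun x := ⟨Dn.mk x.val.1 (congrArg Subtype.val x.fix), by
    refine LinearMap.mem_ker.2 (Dn.ext ?_)
    show f x.val.1 = 0
    exact x.val.2⟩
  invFun y := Dn.mk (⟨y.1.val, LinearMap.mem_ker.2 (congrArg Dn.val y.2)⟩ : LinearMap.ker f)
    (Subtype.ext y.1.fix)
  map_add' x y := Subtype.ext (Dn.ext rfl)
  map_smul' r x := Subtype.ext (Dn.ext rfl)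
  left_inv x := Dn.ext (Subtype.ext rfl)
  right_inv y := Subtype.ext (Dn.ext rfl)

/-- `Dn i (range g) ≃ range (DnMap i g)` -/
noncomputable def rangeDnEquiv (i : Fin m) {M M' : Type u} [AddCommGroup M]
    [Module (∀ j, R j) M] [AddCommGroup M'] [Module (∀ j, R j) M']
    (g : M →ₗ[∀ j, R j] M') :
    Dn R i (LinearMap.range g) ≃ₗ[R i] LinearMap.range (DnMap i g) where
  toFun x := ⟨Dn.mk x.val.1 (congrArg Subtype.val x.fix), by
    obtain ⟨w, hw⟩ := x.val.2
    refine LinearMap.mem_range.2 ⟨Dn.proj i w, Dn.ext ?_⟩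
    show g (eP R i • w) = x.val.1
    rw [map_smul, hw]
    exact congrArg Subtype.val x.fix⟩
  invFun y := Dn.mk (⟨y.1.val, by
    obtain ⟨v, hv⟩ := y.2
    exact LinearMap.mem_range.2 ⟨v.val, congrArg Dn.val hv⟩⟩ : LinearMap.range g)
    (Subtype.ext y.1.fix)
  map_add' x y := Subtype.ext (Dn.ext rfl)
  map_smul' r x := Subtype.ext (Dn.ext rfl)
  left_inv x := Dn.ext (Subtype.ext rfl)
  right_inv y := Subtype.ext (Dn.ext rfl)

/-- `∏ i, Up i (range gᵢ) ≃ range (piUpMap g)` -/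
noncomputable def piRangeEquiv {A B : Fin m → Type u} [∀ j, AddCommGroup (A j)]
    [∀ j, Module (R j) (A j)] [∀ j, AddCommGroup (B j)] [∀ j, Module (R j) (B j)]
    (g : ∀ i, A i →ₗ[R i] B i) :
    (∀ i, Up R i (LinearMap.range (g i))) ≃ₗ[∀ j, R j] LinearMap.range (piUpMap g) where
  toFun v := ⟨fun i => (Up.out i (v i)).1, by
    have : ∀ i, ∃ w, g i w = (Up.out i (v i)).1 := fun i => (Up.out i (v i)).2
    choose w hw using this
    exact LinearMap.mem_range.2 ⟨w, funext hw⟩⟩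
  invFun u := fun i => Up.mk i (⟨u.1 i, by
    obtain ⟨w, hw⟩ := u.2
    exact LinearMap.mem_range.2 ⟨w i, congrFun hw i⟩⟩ : LinearMap.range (g i))
  map_add' v v' := Subtype.ext rfl
  map_smul' s v := Subtype.ext rfl
  left_inv v := by
    funext i
    exact Subtype.ext rfl
  right_inv u := Subtype.ext rfl

/-- `Dn i (ker (piUpMap f)) ≃ ker (f i)` -/
noncomputable def kerPiUpEquiv {A B : Fin m → Type u} [∀ j, AddCommGroup (A j)]
    [∀ j, Module (R j) (A j)] [∀ j, AddCommGroup (B j)] [∀ j, Module (R j) (B j)]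
    (f : ∀ i, A i →ₗ[R i] B i) (i : Fin m) :
    Dn R i (LinearMap.ker (piUpMap f)) ≃ₗ[R i] LinearMap.ker (f i) where
  toFun x := ⟨Up.out i (x.val.1 i),
    LinearMap.mem_ker.2 (congrFun (LinearMap.mem_ker.1 x.val.2) i)⟩
  invFun a := Dn.mk (⟨Pi.single i a.1, by
    refine LinearMap.mem_ker.2 (funext fun j => ?_)
    by_cases h : j = i
    · subst h
      show f j ((Pi.single j (a.1 : A j) : ∀ k, Up R k (A k)) j) = 0
      erw [Pi.single_eq_same]
      exact a.2
    · show f j ((Pi.single i (a.1 : A i) : ∀ k, Up R k (A k)) j) = 0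
      erw [Pi.single_eq_of_ne h, map_zero]⟩ : LinearMap.ker (piUpMap f))
    (Subtype.ext (eP_smul_pi_single i a.1))
  map_add' x y := Subtype.ext rfl
  map_smul' r x := by
    refine Subtype.ext ?_
    show Up.out i (((Pi.single i r : ∀ j, R j) • x.val.1) i) = r • Up.out i (x.val.1 i)
    rw [show ((Pi.single i r : ∀ j, R j) • x.val.1) i
      = ((Pi.single i r : ∀ j, R j) i) • (x.val.1 i) from rfl, Pi.single_eq_same]
    rfl
  left_inv x := Dn.ext (Subtype.ext (by
    rw [Dn.val_mk]
    have hx : (x.val.1 : ∀ k, Up R k (A k)) = Pi.single i (x.val.1 i) := by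
      funext j
      by_cases h : j = i
      · subst h; erw [Pi.single_eq_same]
      · erw [Pi.single_eq_of_ne h]
        have h1 : (eP R i j) • (x.val.1 j) = x.val.1 j :=
          congrFun (congrArg Subtype.val x.fix) j
        rw [eP_apply_ne h, zero_smul] at h1
        exact h1.symm
    exact hx.symm))
  right_inv a := Subtype.ext (Pi.single_eq_same i a.1)

end ProdRing3
section TensorIso
variable {m : ℕ} {R : Fin m → Type u} [∀ i, CommRing (R i)]

open MulOpposite

lemma NCT.mk_eq_mk {S : Type u} [Ring S] {N M : Type u} [AddCommGroup N] [Module Sᵐᵒᵖ N]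
    [AddCommGroup M] [Module S M] {x y : N ⊗[ℤ] M} (h : x - y ∈ NCRel S N M) :
    NCT.mk (R := S) N M x = NCT.mk (R := S) N M y := by
  exact (Submodule.Quotient.eq _).mpr h

section DnProj
variable (i : Fin m) {M : Type u} [AddCommGroup M] [Module (∀ j, R j) M]

lemma Dn.proj_add (x y : M) :
    Dn.proj (R := R) i (x + y) = Dn.proj (R := R) i x + Dn.proj (R := R) i y :=
  Dn.ext (smul_add _ x y)

/-- `Dn.proj` as an additive map -/
noncomputable def DnProjHom : M →+ Dn R i M :=
  AddMonoidHom.mk' (Dn.proj i) (Dn.proj_add i)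

lemma Dn.proj_zsmul (z : ℤ) (x : M) :
    Dn.proj (R := R) i (z • x) = z • Dn.proj (R := R) i x :=
  map_zsmul (DnProjHom (R := R) i) z x

lemma Dn.proj_smul (s : ∀ j, R j) (x : M) :
    Dn.proj (R := R) i (s • x) = (s i) • Dn.proj (R := R) i x := by
  refine Dn.ext ?_
  rw [Dn.val_proj, Dn.val_smul, Dn.val_proj, smul_smul, smul_smul, eP_mul, single_mul_eP]

lemma DnMap_proj {M' : Type u} [AddCommGroup M'] [Module (∀ j, R j) M']
    (f : M →ₗ[∀ j, R j] M') (x : M) :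
    DnMap i f (Dn.proj (R := R) i x) = Dn.proj (R := R) i (f x) := by
  refine Dn.ext ?_
  rw [DnMap_val, Dn.val_proj, Dn.val_proj, map_smul]

end DnProj

section Dn'Proj
variable (i : Fin m) {N : Type u} [AddCommGroup N] [Module (∀ j, R j)ᵐᵒᵖ N]

lemma Dn'.proj_add (x y : N) :
    Dn'.proj (R := R) i (x + y) = Dn'.proj (R := R) i x + Dn'.proj (R := R) i y :=
  Dn'.ext (smul_add _ x y)

noncomputable def Dn'ProjHom : N →+ Dn' R i N :=
  AddMonoidHom.mk' (Dn'.proj i) (Dn'.proj_add i)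

lemma Dn'.proj_zsmul (z : ℤ) (x : N) :
    Dn'.proj (R := R) i (z • x) = z • Dn'.proj (R := R) i x :=
  map_zsmul (Dn'ProjHom (R := R) i) z x

lemma Dn'.proj_opsmul (s : ∀ j, R j) (x : N) :
    Dn'.proj (R := R) i (op s • x) = (op (s i)) • Dn'.proj (R := R) i x := by
  refine Dn'.ext ?_
  rw [Dn'.val_proj, Dn'.val_smul, Dn'.val_proj]
  show op (eP R i) • op s • x = _
  rw [opSmulOpSmul, opSmulOpSmul, MulOpposite.unop_op, mul_eP, eP_mul_single]

lemma Dn'.proj_fix (x : Dn' R i N) : Dn'.proj (R := R) i x.val = x :=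
  Dn'.ext (by rw [Dn'.val_proj, x.fix])

lemma Dn'Map_proj {N' : Type u} [AddCommGroup N'] [Module (∀ j, R j)ᵐᵒᵖ N']
    (φ : N →ₗ[(∀ j, R j)ᵐᵒᵖ] N') (x : N) :
    Dn'Map i φ (Dn'.proj (R := R) i x) = Dn'.proj (R := R) i (φ x) := by
  refine Dn'.ext ?_
  rw [Dn'Map_val, Dn'.val_proj, Dn'.val_proj, map_smul]

end Dn'Proj

/-! ### The collapse isomorphism `(Up' I) ⊗_S M ≃ I ⊗_{R i} (Dn i M)` -/

section C1
variable (i : Fin m) (I : Type u) [AddCommGroup I] [Module (R i)ᵐᵒᵖ I]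
  (M : Type u) [AddCommGroup M] [Module (∀ j, R j) M]

noncomputable def c1Bil : Up' R i I →ₗ[ℤ] M →ₗ[ℤ] NCTensor (R i) I (Dn R i M) :=
  LinearMap.mk₂ ℤ
    (fun n x => NCT.mk (R := R i) I (Dn R i M) ((Up'.out (R := R) i n) ⊗ₜ[ℤ] Dn.proj (R := R) i x))
    (fun n n' x => by rw [show Up'.out (R := R) i (n + n') = Up'.out (R := R) i n + Up'.out (R := R) i n' from rfl,
      TensorProduct.add_tmul, map_add])
    (fun z n x => by rw [show Up'.out (R := R) i (z • n) = z • Up'.out (R := R) i n from rfl,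
      ← TensorProduct.smul_tmul', map_smul])
    (fun n x x' => by rw [Dn.proj_add, TensorProduct.tmul_add, map_add])
    (fun z n x => by rw [Dn.proj_zsmul, TensorProduct.tmul_smul, map_smul])

lemma c1Bil_rel : ∀ (n : Up' R i I) (s : ∀ j, R j) (x : M),
    c1Bil i I M (op s • n) x = c1Bil i I M n (s • x) := by
  intro n s x
  show NCT.mk (R := R i) I (Dn R i M) ((Up'.out (R := R) i (op s • n)) ⊗ₜ[ℤ] Dn.proj (R := R) i x)
    = NCT.mk (R := R i) I (Dn R i M) ((Up'.out (R := R) i n) ⊗ₜ[ℤ] Dn.proj (R := R) i (s • x))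
  rw [show Up'.out (R := R) i (op s • n) = op (s i) • Up'.out (R := R) i n from rfl, NCT.rel, Dn.proj_smul]

noncomputable def c1Fwd : NCTensor (∀ j, R j) (Up' R i I) M →ₗ[ℤ]
    NCTensor (R i) I (Dn R i M) :=
  NCT.lift (c1Bil i I M) (c1Bil_rel i I M)

@[simp] lemma c1Fwd_mk (n : Up' R i I) (x : M) :
    c1Fwd i I M (NCT.mk (R := ∀ j, R j) (Up' R i I) M (n ⊗ₜ[ℤ] x))
      = NCT.mk (R := R i) I (Dn R i M) ((Up'.out (R := R) i n) ⊗ₜ[ℤ] Dn.proj (R := R) i x) := rfl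

noncomputable def c1BilInv : I →ₗ[ℤ] Dn R i M →ₗ[ℤ] NCTensor (∀ j, R j) (Up' R i I) M :=
  LinearMap.mk₂ ℤ
    (fun x y => NCT.mk (R := ∀ j, R j) (Up' R i I) M ((Up'.mk (R := R) i x) ⊗ₜ[ℤ] y.val))
    (fun x x' y => by rw [show Up'.mk (R := R) i (x + x') = Up'.mk (R := R) i x + Up'.mk (R := R) i x' from rfl,
      TensorProduct.add_tmul, map_add])
    (fun z x y => by rw [show Up'.mk (R := R) i (z • x) = z • Up'.mk (R := R) i x from rfl,
      ← TensorProduct.smul_tmul', map_smul])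
    (fun x y y' => by rw [show (y + y').val = y.val + y'.val from rfl,
      TensorProduct.tmul_add, map_add])
    (fun z x y => by rw [show (z • y).val = z • y.val from rfl,
      TensorProduct.tmul_smul, map_smul])

lemma c1BilInv_rel : ∀ (x : I) (r : R i) (y : Dn R i M),
    c1BilInv i I M (op r • x) y = c1BilInv i I M x (r • y) := by
  intro x r y
  show NCT.mk (R := ∀ j, R j) (Up' R i I) M ((Up'.mk (R := R) i (op r • x)) ⊗ₜ[ℤ] y.val)
    = NCT.mk (R := ∀ j, R j) (Up' R i I) M ((Up'.mk (R := R) i x) ⊗ₜ[ℤ] (r • y).val)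
  have h1 : (Up'.mk (R := R) i (op r • x)) = op (Pi.single i r : ∀ j, R j) • Up'.mk (R := R) i x := by
    rw [Up'.smul_eq, Pi.single_eq_same]
    rfl
  rw [h1, NCT.rel, Dn.val_smul]

noncomputable def c1Bwd : NCTensor (R i) I (Dn R i M) →ₗ[ℤ]
    NCTensor (∀ j, R j) (Up' R i I) M :=
  NCT.lift (R := R i) (c1BilInv i I M) (c1BilInv_rel i I M)

@[simp] lemma c1Bwd_mk (x : I) (y : Dn R i M) :
    c1Bwd i I M (NCT.mk (R := R i) I (Dn R i M) (x ⊗ₜ[ℤ] y))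
      = NCT.mk (R := ∀ j, R j) (Up' R i I) M ((Up'.mk (R := R) i x) ⊗ₜ[ℤ] y.val) := rfl

lemma c1_left_inv : ∀ t : NCTensor (∀ j, R j) (Up' R i I) M, c1Bwd i I M (c1Fwd i I M t) = t := by
  refine NCT.ind ?_ ?_ ?_
  · simp only [map_zero]
  · intro n x
    rw [c1Fwd_mk, c1Bwd_mk]
    refine NCT.mk_eq_mk ?_
    have hg : ((op (1 - eP R i) • n) ⊗ₜ[ℤ] x - n ⊗ₜ[ℤ] ((1 - eP R i) • x))
        ∈ NCRel (∀ j, R j) (Up' R i I) M :=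
      Submodule.subset_span ⟨n, 1 - eP R i, x, rfl⟩
    have h0 : op (1 - eP R i) • n = 0 := by
      rw [Up'.smul_eq]
      have : (1 - eP R i) i = 0 := by
        rw [Pi.sub_apply, Pi.one_apply, eP_apply_same, sub_self]
      rw [this, op_zero, zero_smul]
    rw [h0, TensorProduct.zero_tmul, sub_smul, one_smul, TensorProduct.tmul_sub,
      zero_sub, neg_sub] at hg
    show (Up'.mk (R := R) i (Up'.out (R := R) i n)) ⊗ₜ[ℤ] (Dn.proj (R := R) i x).val - n ⊗ₜ[ℤ] x
      ∈ NCRel (∀ j, R j) (Up' R i I) M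
    rw [Dn.val_proj]
    exact hg
  · intro a b ha hb
    rw [map_add, map_add, ha, hb]

lemma c1_right_inv : ∀ t : NCTensor (R i) I (Dn R i M), c1Fwd i I M (c1Bwd i I M t) = t := by
  refine NCT.ind (R := R i) ?_ ?_ ?_
  · simp only [map_zero]
  · intro x y
    rw [c1Bwd_mk, c1Fwd_mk]
    congr 1
    rw [show Up'.out (R := R) i (Up'.mk (R := R) i x) = x from rfl]
    congr 1
    refine Dn.ext ?_
    rw [Dn.val_proj]
    exact y.fix
  · intro a b ha hb
    rw [map_add, map_add, ha, hb]

/-- the collapse equivalence -/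
noncomputable def c1 : NCTensor (∀ j, R j) (Up' R i I) M ≃+ NCTensor (R i) I (Dn R i M) where
  toFun := c1Fwd i I M
  invFun := c1Bwd i I M
  left_inv := c1_left_inv i I M
  right_inv := c1_right_inv i I M
  map_add' := map_add _

@[simp] lemma c1_apply (t : NCTensor (∀ j, R j) (Up' R i I) M) : c1 i I M t = c1Fwd i I M t := rfl
@[simp] lemma c1_symm_apply (t : NCTensor (R i) I (Dn R i M)) : (c1 i I M).symm t = c1Bwd i I M t := rfl

end C1

section C1Nat
variable (i : Fin m) (I : Type u) [AddCommGroup I] [Module (R i)ᵐᵒᵖ I]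
  {M M' : Type u} [AddCommGroup M] [Module (∀ j, R j) M] [AddCommGroup M']
  [Module (∀ j, R j) M']

lemma c1_natM (f : M →ₗ[∀ j, R j] M') (t : NCTensor (∀ j, R j) (Up' R i I) M) :
    c1Fwd i I M' (NCmap (∀ j, R j) (Up' R i I) f t)
      = NCmap (R i) I (DnMap i f) (c1Fwd i I M t) := by
  induction t using NCT.ind with
  | h0 => simp only [map_zero]
  | htmul n x =>
    rw [NCmap_mk, c1Fwd_mk, c1Fwd_mk, NCmap_mk, DnMap_proj]
  | hadd a b ha hb => simp only [map_add, ha, hb]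

end C1Nat

section C1NatL
variable (i : Fin m) {I I' : Type u} [AddCommGroup I] [Module (R i)ᵐᵒᵖ I]
  [AddCommGroup I'] [Module (R i)ᵐᵒᵖ I'] (M : Type u) [AddCommGroup M]
  [Module (∀ j, R j) M]

lemma c1_natN (φ : I →ₗ[(R i)ᵐᵒᵖ] I') (t : NCTensor (∀ j, R j) (Up' R i I) M) :
    c1Fwd i I' M (NCmapL (∀ j, R j) M (Up'Map i φ) t)
      = NCmapL (R i) (Dn R i M) φ (c1Fwd i I M t) := by
  induction t using NCT.ind with
  | h0 => simp only [map_zero]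
  | htmul n x =>
    rw [NCmapL_mk, c1Fwd_mk, c1Fwd_mk, NCmapL_mk]
    rfl
  | hadd a b ha hb => simp only [map_add, ha, hb]

end C1NatL
end TensorIso
section C2
open MulOpposite
variable {m : ℕ} {R : Fin m → Type u} [∀ i, CommRing (R i)]
variable (N : Type u) [AddCommGroup N] [Module (∀ j, R j)ᵐᵒᵖ N]
  (A : Fin m → Type u) [∀ j, AddCommGroup (A j)] [∀ j, Module (R j) (A j)]

noncomputable def c2Bil : N →ₗ[ℤ] (∀ j, Up R j (A j)) →ₗ[ℤ]
    (∀ i, NCTensor (R i) (Dn' R i N) (A i)) :=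
  LinearMap.mk₂ ℤ
    (fun n a i => NCT.mk (R := R i) (Dn' R i N) (A i) ((Dn'.proj (R := R) i n) ⊗ₜ[ℤ] (a i)))
    (fun n n' a => by
      funext i; simp only [Pi.add_apply]
      erw [Dn'.proj_add, TensorProduct.add_tmul, map_add])
    (fun z n a => by
      funext i; simp only [Pi.smul_apply]
      erw [Dn'.proj_zsmul, ← TensorProduct.smul_tmul', map_smul])
    (fun n a a' => by
      funext i; simp only [Pi.add_apply]
      erw [TensorProduct.tmul_add, map_add])
    (fun z n a => by
      funext i; simp only [Pi.smul_apply]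
      erw [TensorProduct.tmul_smul, map_smul])

lemma c2Bil_rel : ∀ (n : N) (s : ∀ j, R j) (a : ∀ j, Up R j (A j)),
    c2Bil N A (op s • n) a = c2Bil N A n (s • a) := by
  intro n s a
  funext i
  show NCT.mk (R := R i) (Dn' R i N) (A i) ((Dn'.proj (R := R) i (op s • n)) ⊗ₜ[ℤ] (a i))
    = NCT.mk (R := R i) (Dn' R i N) (A i) ((Dn'.proj (R := R) i n) ⊗ₜ[ℤ] ((s • a) i))
  erw [Dn'.proj_opsmul, NCT.rel]
  rfl

noncomputable def c2Fwd : NCTensor (∀ j, R j) N (∀ j, Up R j (A j)) →ₗ[ℤ]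
    ∀ i, NCTensor (R i) (Dn' R i N) (A i) :=
  NCT.lift (c2Bil N A) (c2Bil_rel N A)

@[simp] lemma c2Fwd_mk (n : N) (a : ∀ j, Up R j (A j)) :
    c2Fwd N A (NCT.mk (R := ∀ j, R j) N (∀ j, Up R j (A j)) (n ⊗ₜ[ℤ] a))
      = fun i => NCT.mk (R := R i) (Dn' R i N) (A i)
          ((Dn'.proj (R := R) i n) ⊗ₜ[ℤ] (a i)) := rfl

noncomputable def c2BwdAux (i : Fin m) : Dn' R i N →ₗ[ℤ] A i →ₗ[ℤ]
    NCTensor (∀ j, R j) N (∀ j, Up R j (A j)) :=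
  LinearMap.mk₂ ℤ
    (fun x a => NCT.mk (R := ∀ j, R j) N (∀ j, Up R j (A j))
      (x.val ⊗ₜ[ℤ] (Pi.single i a : ∀ j, Up R j (A j))))
    (fun x x' a => by
      rw [show (x + x').val = x.val + x'.val from rfl, TensorProduct.add_tmul, map_add])
    (fun z x a => by
      rw [show (z • x).val = z • x.val from rfl, ← TensorProduct.smul_tmul', map_smul])
    (fun x a a' => by
      erw [show (Pi.single i (a + a') : ∀ j, Up R j (A j))
        = Pi.single i a + Pi.single i a' from Pi.single_add i a a',
        TensorProduct.tmul_add, map_add]; rfl)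
    (fun z x a => by
      erw [show (Pi.single i (z • a) : ∀ j, Up R j (A j))
        = z • Pi.single i a from Pi.single_smul i z a,
        TensorProduct.tmul_smul, map_smul]; rfl)

lemma c2BwdAux_rel (i : Fin m) : ∀ (x : Dn' R i N) (r : R i) (a : A i),
    c2BwdAux N A i (op r • x) a = c2BwdAux N A i x (r • a) := by
  intro x r a
  show NCT.mk (R := ∀ j, R j) N (∀ j, Up R j (A j))
      ((op r • x).val ⊗ₜ[ℤ] (Pi.single i a : ∀ j, Up R j (A j)))
    = NCT.mk (R := ∀ j, R j) N (∀ j, Up R j (A j))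
      (x.val ⊗ₜ[ℤ] (Pi.single i (r • a) : ∀ j, Up R j (A j)))
  rw [Dn'.val_smul, unop_op, NCT.rel, smul_pi_single, Pi.single_eq_same]
  rfl

noncomputable def c2BwdI (i : Fin m) : NCTensor (R i) (Dn' R i N) (A i) →ₗ[ℤ]
    NCTensor (∀ j, R j) N (∀ j, Up R j (A j)) :=
  NCT.lift (R := R i) (c2BwdAux N A i) (c2BwdAux_rel N A i)

@[simp] lemma c2BwdI_mk (i : Fin m) (x : Dn' R i N) (a : A i) :
    c2BwdI N A i (NCT.mk (R := R i) (Dn' R i N) (A i) (x ⊗ₜ[ℤ] a))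
      = NCT.mk (R := ∀ j, R j) N (∀ j, Up R j (A j))
          (x.val ⊗ₜ[ℤ] (Pi.single i a : ∀ j, Up R j (A j))) := rfl

noncomputable def c2Bwd : (∀ i, NCTensor (R i) (Dn' R i N) (A i)) →ₗ[ℤ]
    NCTensor (∀ j, R j) N (∀ j, Up R j (A j)) :=
  ∑ i, (c2BwdI N A i).comp (LinearMap.proj (R := ℤ) i)

lemma c2Bwd_apply (v : ∀ i, NCTensor (R i) (Dn' R i N) (A i)) :
    c2Bwd N A v = ∑ i, c2BwdI N A i (v i) := by
  rw [c2Bwd, LinearMap.sum_apply]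
  rfl

lemma c2Fwd_single (i : Fin m) :
    ∀ x : NCTensor (R i) (Dn' R i N) (A i),
      c2Fwd N A (c2BwdI N A i x) = Pi.single i x := by
  refine NCT.ind (R := R i) ?_ ?_ ?_
  · rw [map_zero, map_zero, Pi.single_zero]
  · intro x a
    rw [c2BwdI_mk, c2Fwd_mk]
    funext j
    by_cases h : j = i
    · subst h
      erw [Pi.single_eq_same, Pi.single_eq_same, Dn'.proj_fix]
    · erw [Pi.single_eq_of_ne h, Pi.single_eq_of_ne h, TensorProduct.tmul_zero, map_zero]
  · intro a b ha hb
    rw [map_add, map_add, ha, hb, Pi.single_add]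

lemma c2_right_inv : ∀ v : ∀ i, NCTensor (R i) (Dn' R i N) (A i),
    c2Fwd N A (c2Bwd N A v) = v := by
  intro v
  rw [c2Bwd_apply, map_sum]
  calc (∑ i, c2Fwd N A (c2BwdI N A i (v i))) = ∑ i, Pi.single i (v i) := by
        refine Finset.sum_congr rfl fun i _ => c2Fwd_single N A i (v i)
    _ = v := Finset.univ_sum_single v

lemma c2_left_inv : ∀ t : NCTensor (∀ j, R j) N (∀ j, Up R j (A j)),
    c2Bwd N A (c2Fwd N A t) = t := by
  refine NCT.ind ?_ ?_ ?_
  · rw [map_zero, map_zero]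
  · intro n a
    rw [c2Fwd_mk, c2Bwd_apply]
    have key : ∀ i, c2BwdI N A i (NCT.mk (R := R i) (Dn' R i N) (A i)
        ((Dn'.proj (R := R) i n) ⊗ₜ[ℤ] (a i)))
        = NCT.mk (R := ∀ j, R j) N (∀ j, Up R j (A j))
            (n ⊗ₜ[ℤ] (Pi.single i (a i) : ∀ j, Up R j (A j))) := by
      intro i
      erw [c2BwdI_mk, Dn'.val_proj, NCT.rel, eP_smul_pi_single]
      rfl
    rw [Finset.sum_congr rfl fun i _ => key i]
    rw [← map_sum, ← TensorProduct.tmul_sum]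
    congr 1
    exact congrArg (n ⊗ₜ[ℤ] ·) (Finset.univ_sum_single a)
  · intro x y hx hy
    rw [map_add, map_add, hx, hy]

/-- the product collapse equivalence -/
noncomputable def c2 : NCTensor (∀ j, R j) N (∀ j, Up R j (A j)) ≃+
    ∀ i, NCTensor (R i) (Dn' R i N) (A i) where
  toFun := c2Fwd N A
  invFun := c2Bwd N A
  left_inv := c2_left_inv N A
  right_inv := c2_right_inv N A
  map_add' := map_add _

end C2

section C2Nat
open MulOpposite
variable {m : ℕ} {R : Fin m → Type u} [∀ i, CommRing (R i)]

lemma c2_natA {N : Type u} [AddCommGroup N] [Module (∀ j, R j)ᵐᵒᵖ N]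
    {A A' : Fin m → Type u} [∀ j, AddCommGroup (A j)] [∀ j, Module (R j) (A j)]
    [∀ j, AddCommGroup (A' j)] [∀ j, Module (R j) (A' j)]
    (f : ∀ i, A i →ₗ[R i] A' i) (t : NCTensor (∀ j, R j) N (∀ j, Up R j (A j))) :
    c2Fwd N A' (NCmap (∀ j, R j) N (piUpMap f) t)
      = fun i => NCmap (R i) (Dn' R i N) (f i) (c2Fwd N A t i) := by
  induction t using NCT.ind with
  | h0 => simp only [map_zero]; funext i; simp only [Pi.zero_apply, map_zero]
  | htmul n a =>
    rw [NCmap_mk, c2Fwd_mk, c2Fwd_mk]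
    funext i
    erw [NCmap_mk]
  | hadd a b ha hb =>
    simp only [map_add, ha, hb]
    funext i
    rw [Pi.add_apply, Pi.add_apply, map_add]

lemma c2_natN {N N' : Type u} [AddCommGroup N] [Module (∀ j, R j)ᵐᵒᵖ N]
    [AddCommGroup N'] [Module (∀ j, R j)ᵐᵒᵖ N']
    {A : Fin m → Type u} [∀ j, AddCommGroup (A j)] [∀ j, Module (R j) (A j)]
    (φ : N →ₗ[(∀ j, R j)ᵐᵒᵖ] N') (t : NCTensor (∀ j, R j) N (∀ j, Up R j (A j))) :
    c2Fwd N' A (NCmapL (∀ j, R j) (∀ j, Up R j (A j)) φ t)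
      = fun i => NCmapL (R i) (A i) (Dn'Map i φ) (c2Fwd N A t i) := by
  induction t using NCT.ind with
  | h0 => simp only [map_zero]; funext i; simp only [Pi.zero_apply, map_zero]
  | htmul n a =>
    rw [NCmapL_mk, c2Fwd_mk, c2Fwd_mk]
    funext i
    erw [NCmapL_mk, Dn'Map_proj]
  | hadd a b ha hb =>
    simp only [map_add, ha, hb]
    funext i
    rw [Pi.add_apply, Pi.add_apply, map_add]

end C2Nat
section Transfers
open MulOpposite
variable {m : ℕ} {R : Fin m → Type u} [∀ i, CommRing (R i)]

lemma flatDn (i : Fin m) (F : Type u) [AddCommGroup F] [Module (∀ j, R j) F]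
    (hF : FlatModule (∀ j, R j) F) : FlatModule (R i) (Dn R i F) := by
  intro N N' _ _ _ _ f hf
  have h1 : Function.Injective (Up'Map (R := R) i f) := hf
  have h2 := hF (Up' R i N) (Up' R i N') (Up'Map i f) h1
  have key : ∀ t : NCTensor (R i) N (Dn R i F), NCmapL (R i) (Dn R i F) f t
      = c1Fwd i N' F (NCmapL (∀ j, R j) F (Up'Map i f) (c1Bwd i N F t)) := by
    intro t
    rw [c1_natN, c1_right_inv]
  intro a b hab
  rw [key a, key b] at hab
  have hab2 := (c1 i N' F).injective hab
  have hab3 := h2 hab2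
  exact (c1 i N F).symm.injective hab3

lemma flatUp (A : Fin m → Type u) [∀ j, AddCommGroup (A j)] [∀ j, Module (R j) (A j)]
    (hA : ∀ i, FlatModule (R i) (A i)) : FlatModule (∀ j, R j) (∀ j, Up R j (A j)) := by
  intro N N' _ _ _ _ φ hφ
  have hDn : ∀ i, Function.Injective (Dn'Map (R := R) i φ) := fun i => Dn'Map_injective i φ hφ
  have hcomp : ∀ i, Function.Injective (NCmapL (R i) (A i) (Dn'Map i φ)) := fun i =>
    hA i (Dn' R i N) (Dn' R i N') (Dn'Map i φ) (hDn i)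
  have key : ∀ t : NCTensor (∀ j, R j) N (∀ j, Up R j (A j)),
      NCmapL (∀ j, R j) (∀ j, Up R j (A j)) φ t
        = c2Bwd N' A (fun i => NCmapL (R i) (A i) (Dn'Map i φ) (c2Fwd N A t i)) := by
    intro t
    rw [← c2_natN, c2_left_inv]
  intro a b hab
  rw [key a, key b] at hab
  have hab2 := (c2 N' A).symm.injective hab
  have hab3 : ∀ i, c2Fwd N A a i = c2Fwd N A b i := fun i => hcomp i (congrFun hab2 i)
  exact (c2 N A).injective (funext hab3)

lemma Up'.smul_eq' (i : Fin m) {N : Type u} [AddCommGroup N] [Module (R i)ᵐᵒᵖ N]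
    (s : (∀ j, R j)ᵐᵒᵖ) (a : Up' R i N) : s • a = op (s.unop i) • a := by
  conv_lhs => rw [← op_unop s]
  exact Up'.smul_eq i s.unop a

lemma Dn'.proj_smul' (i : Fin m) {N : Type u} [AddCommGroup N] [Module (∀ j, R j)ᵐᵒᵖ N]
    (s : (∀ j, R j)ᵐᵒᵖ) (x : N) :
    Dn'.proj (R := R) i (s • x) = op (s.unop i) • Dn'.proj (R := R) i x := by
  conv_lhs => rw [← op_unop s]
  exact Dn'.proj_opsmul i s.unop x

lemma injUp (i : Fin m) (I : Type u) [AddCommGroup I] [Module (R i)ᵐᵒᵖ I]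
    (hI : Module.Injective (R i)ᵐᵒᵖ I) :
    Module.Injective (∀ j, R j)ᵐᵒᵖ (Up' R i I) := by
  constructor
  intro X Y _ _ _ _ f hf g
  obtain ⟨h', hh'⟩ := hI.out (Dn'Map i f) (Dn'Map_injective i f hf)
    ({ toFun := fun x => g x.val
       map_add' := fun x y => by rw [Dn'.val_add, map_add]; rfl
       map_smul' := fun r x => by
         simp only [RingHom.id_apply]
         rw [Dn'.val_smul, map_smul, Up'.smul_eq, Pi.single_eq_same, op_unop]; rfl } :
      Dn' R i X →ₗ[(R i)ᵐᵒᵖ] I)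
  refine ⟨{ toFun := fun y => h' (Dn'.proj i y)
            map_add' := fun x y => by rw [Dn'.proj_add, map_add]; rfl
            map_smul' := fun s y => by
              simp only [RingHom.id_apply]
              rw [Dn'.proj_smul', map_smul]
              rfl }, fun x => ?_⟩
  show h' (Dn'.proj i (f x)) = g x
  rw [← Dn'Map_proj, hh']
  show g (Dn'.proj (R := R) i x).val = g x
  rw [Dn'.val_proj, map_smul, Up'.smul_eq, eP_apply_same, op_one, one_smul]

lemma injDn (i : Fin m) (I : Type u) [AddCommGroup I] [Module (∀ j, R j)ᵐᵒᵖ I]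
    (hI : Module.Injective (∀ j, R j)ᵐᵒᵖ I) :
    Module.Injective (R i)ᵐᵒᵖ (Dn' R i I) := by
  constructor
  intro X Y _ _ _ _ f hf g
  obtain ⟨H, hH⟩ := hI.out (Up'Map i f)
    (show Function.Injective (Up'Map (R := R) i f) from hf)
    ({ toFun := fun x => (g x).val
       map_add' := fun x y => by erw [map_add, Dn'.val_add]
       map_smul' := fun s x => by
         simp only [RingHom.id_apply]
         erw [Up'.smul_eq', map_smul, Dn'.val_smul, unop_op]
         have hmul : s * op (eP R i) = op (Pi.single i (s.unop i) : ∀ j, R j) := by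
           conv_lhs => rw [← op_unop s]
           rw [← op_mul, eP_mul]
         conv_rhs => rw [← (g x).fix, smul_smul, hmul] } :
      Up' R i X →ₗ[(∀ j, R j)ᵐᵒᵖ] I)
  refine ⟨{ toFun := fun y => Dn'.proj i (H y)
            map_add' := fun x y => by erw [map_add, Dn'.proj_add]
            map_smul' := fun r y => by
              simp only [RingHom.id_apply]
              have h1 : H (r • y) = op (Pi.single i r.unop : ∀ j, R j) • H y := by
                have h2 : r • y = op (Pi.single i r.unop : ∀ j, R j) • Up'.mk (R := R) i y := by
                  rw [Up'.smul_eq, Pi.single_eq_same, op_unop]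
                  rfl
                rw [h2, map_smul]
                rfl
              rw [h1, Dn'.proj_opsmul, Pi.single_eq_same, op_unop] }, fun x => ?_⟩
  show Dn'.proj (R := R) i (H (Up'Map i f x)) = g x
  erw [hH]
  show Dn'.proj (R := R) i (g x).val = g x
  exact Dn'.proj_fix i (g x)

end Transfers
section CFR
variable {m : ℕ} {R : Fin m → Type u} [∀ i, CommRing (R i)]

lemma exact_pi' {ι : Type*} {A B C : ι → Type*} [∀ i, Zero (C i)]
    {f : ∀ i, A i → B i} {g : ∀ i, B i → C i}
    (h : ∀ i, Function.Exact (f i) (g i)) :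
    Function.Exact (fun (v : ∀ i, A i) i => f i (v i)) (fun v i => g i (v i)) := by
  intro v
  constructor
  · intro hv
    have : ∀ i, ∃ a, f i a = v i := fun i => (h i (v i)).1 (congrFun hv i)
    choose a ha using this
    exact ⟨a, funext ha⟩
  · rintro ⟨a, rfl⟩
    funext i
    exact (h i (a i |> f i)).2 ⟨a i, rfl⟩

lemma exact_piUpMap {A B C : Fin m → Type u} [∀ j, AddCommGroup (A j)]
    [∀ j, Module (R j) (A j)] [∀ j, AddCommGroup (B j)] [∀ j, Module (R j) (B j)]
    [∀ j, AddCommGroup (C j)] [∀ j, Module (R j) (C j)]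
    (f : ∀ i, A i →ₗ[R i] B i) (g : ∀ i, B i →ₗ[R i] C i)
    (h : ∀ i, Function.Exact (f i) (g i)) :
    Function.Exact (piUpMap f) (piUpMap g) := by
  intro y
  constructor
  · intro hy
    have : ∀ i, ∃ a, f i a = y i := fun i => (h i (y i)).1 (congrFun hy i)
    choose a ha using this
    exact ⟨a, funext ha⟩
  · rintro ⟨a, rfl⟩
    funext i
    exact (h i (f i (a i))).2 ⟨a i, rfl⟩

/-- `Dn` of a complete flat resolution -/
noncomputable def cfrDn (i : Fin m) (M : ModuleCat.{u} (∀ j, R j))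
    (C : CompleteFlatResolution (∀ j, R j) M) :
    CompleteFlatResolution (R i) (ModuleCat.of (R i) (Dn R i M)) where
  F z := ModuleCat.of (R i) (Dn R i (C.F z))
  d z := DnMap i (C.d z)
  flat z := flatDn i (C.F z) (C.flat z)
  exact z := DnMap_exact i (C.d (z + 1)) (C.d z) (C.exact z)
  iso := C.iso.map (fun e => (DnEquiv i e).trans (rangeDnEquiv i (C.d (-1))))
  tensorExact I _ _ hInj z := by
    have h := C.tensorExact (Up' R i I) (injUp i I hInj) z
    exact Function.Exact.of_ladder_addEquiv'
      (c1 i I (C.F (z + 1 + 1))) (c1 i I (C.F (z + 1))) (c1 i I (C.F z))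
      (fun a => (c1_natM i I (C.d (z + 1)) a).symm)
      (fun b => (c1_natM i I (C.d z) b).symm) h

/-- product of complete flat resolutions -/
noncomputable def cfrUp (Mi : ∀ i, ModuleCat.{u} (R i))
    (C : ∀ i, CompleteFlatResolution (R i) (Mi i)) :
    CompleteFlatResolution (∀ j, R j)
      (ModuleCat.of (∀ j, R j) (∀ i, Up R i (Mi i))) where
  F z := ModuleCat.of (∀ j, R j) (∀ i, Up R i ((C i).F z))
  d z := piUpMap (fun i => (C i).d z)
  flat z := flatUp _ (fun i => (C i).flat z)
  exact z := exact_piUpMap (fun i => (C i).d (z + 1)) (fun i => (C i).d z)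
    (fun i => (C i).exact z)
  iso := by
    have e := fun i => ((C i).iso).some
    exact ⟨(LinearEquiv.piCongrRight (fun i => UpEquiv i (e i))).trans
      (piRangeEquiv (fun i => (C i).d (-1)))⟩
  tensorExact I _ _ hInj z := by
    have h := fun i => (C i).tensorExact (Dn' R i I) (injDn i I hInj) z
    have hpi := exact_pi' (ι := Fin m)
      (A := fun i => NCTensor (R i) (Dn' R i I) ((C i).F (z + 1 + 1)))
      (B := fun i => NCTensor (R i) (Dn' R i I) ((C i).F (z + 1)))
      (C := fun i => NCTensor (R i) (Dn' R i I) ((C i).F z)) h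
    refine Function.Exact.of_ladder_addEquiv'
      (c2 I (fun i => (C i).F (z + 1 + 1))).symm
      (c2 I (fun i => (C i).F (z + 1))).symm
      (c2 I (fun i => (C i).F z)).symm ?_ ?_ hpi
    · intro a
      have h1 := c2_natA (N := I) (fun i => (C i).d (z + 1))
        (c2Bwd I (fun i => (C i).F (z + 1 + 1)) a)
      rw [c2_right_inv] at h1
      have h3 := congrArg (c2Bwd I (fun i => (C i).F (z + 1))) h1
      rw [c2_left_inv] at h3
      exact h3
    · intro b
      have h1 := c2_natA (N := I) (fun i => (C i).d z)
        (c2Bwd I (fun i => (C i).F (z + 1)) b)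
      rw [c2_right_inv] at h1
      have h3 := congrArg (c2Bwd I (fun i => (C i).F z)) h1
      rw [c2_left_inv] at h3
      exact h3

lemma isGF_congr {S : Type u} [Ring S] {M M' : Type u} [AddCommGroup M] [Module S M]
    [AddCommGroup M'] [Module S M'] (e : M ≃ₗ[S] M') (h : IsGorensteinFlat S M) :
    IsGorensteinFlat S M' := by
  obtain ⟨C⟩ := h
  exact ⟨{ C with iso := C.iso.map (fun f => e.symm.trans f) }⟩

lemma flat_subsingleton {S : Type u} [Ring S] (M : Type u) [AddCommGroup M] [Module S M]
    [Subsingleton M] : FlatModule S M := by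
  intro N N' _ _ _ _ f _
  haveI := NCT.subsingleton_right (R := S) N M
  intro a b _
  exact Subsingleton.elim a b

lemma isGF_subsingleton {S : Type u} [Ring S] (M : Type u) [AddCommGroup M] [Module S M]
    [Subsingleton M] : IsGorensteinFlat S M := by
  refine ⟨⟨fun _ => ModuleCat.of S M, fun _ => 0, ?_, ?_, ?_, ?_⟩⟩
  · intro z
    exact flat_subsingleton M
  · intro z
    show Function.Exact (0 : M →ₗ[S] M) (0 : M →ₗ[S] M)
    exact fun y => ⟨fun _ => ⟨0, Subsingleton.elim _ _⟩, fun _ => Subsingleton.elim _ _⟩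
  · show Nonempty (M ≃ₗ[S] LinearMap.range (0 : M →ₗ[S] M))
    exact ⟨LinearEquiv.ofSubsingletons S⟩
  · intro I _ _ _ z
    haveI := NCT.subsingleton_right (R := S) I M
    show Function.Exact (NCmap S I (0 : M →ₗ[S] M)) (NCmap S I (0 : M →ₗ[S] M))
    exact fun y => ⟨fun _ => ⟨0, Subsingleton.elim _ _⟩, fun _ => Subsingleton.elim _ _⟩

end CFR
section GfdLEMach
variable {S : Type u} [Ring S]

lemma gfdLE_succ_iff (k : ℕ) (M : ModuleCat.{u} S) : gfdLE S (k + 1) M ↔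
    ∃ (G : ModuleCat.{u} S) (f : G →ₗ[S] M), Function.Surjective f ∧
      IsGorensteinFlat S G ∧ gfdLE S k (ModuleCat.of S (LinearMap.ker f)) := Iff.rfl

lemma gfdLE_congr : ∀ (k : ℕ) (M M' : ModuleCat.{u} S) (_ : M ≃ₗ[S] M'),
    gfdLE S k M → gfdLE S k M'
  | 0, _, _, e, h => isGF_congr e h
  | (k+1), M, M', e, h => by
    obtain ⟨G, f, surj, hGF, hker⟩ := h
    refine ⟨G, e.toLinearMap.comp f, ?_, hGF, ?_⟩
    · intro y
      obtain ⟨x, hx⟩ := surj (e.symm y)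
      refine ⟨x, ?_⟩
      rw [LinearMap.comp_apply, hx]
      exact e.apply_symm_apply y
    · have hk : LinearMap.ker (e.toLinearMap.comp f) = LinearMap.ker f := by
        rw [LinearMap.ker_comp, LinearMap.ker_eq_bot.mpr e.injective, Submodule.comap_bot]
      rw [hk]
      exact hker

lemma gfdLE_subsingleton : ∀ (k : ℕ) (M : ModuleCat.{u} S), Subsingleton M → gfdLE S k M
  | 0, M, h => by
    haveI := h
    exact isGF_subsingleton M
  | (k+1), M, h => by
    haveI := h
    refine ⟨M, LinearMap.id, Function.surjective_id, isGF_subsingleton M, ?_⟩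
    refine gfdLE_subsingleton k _ ?_
    exact ⟨fun a b => Subtype.ext (Subsingleton.elim _ _)⟩

lemma ker_id_subsingleton (M : ModuleCat.{u} S) :
    Subsingleton ↥(LinearMap.ker (LinearMap.id : M →ₗ[S] M)) := by
  constructor
  intro a b
  refine Subtype.ext ?_
  have ha : (a : M) = 0 := a.2
  have hb : (b : M) = 0 := b.2
  rw [ha, hb]

lemma gfdLE_mono : ∀ (k : ℕ) (M : ModuleCat.{u} S), gfdLE S k M → gfdLE S (k + 1) M
  | 0, M, h => ⟨M, LinearMap.id, Function.surjective_id, h,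
      gfdLE_subsingleton 0 _ (ker_id_subsingleton M)⟩
  | (k+1), M, h => by
    obtain ⟨G, f, s, hG, hk⟩ := h
    exact ⟨G, f, s, hG, gfdLE_mono k _ hk⟩

lemma gfdLE_of_le {k k' : ℕ} (h : k' ≤ k) (M : ModuleCat.{u} S) :
    gfdLE S k' M → gfdLE S k M := by
  induction h with
  | refl => exact id
  | step _ ih => exact fun hk => gfdLE_mono _ M (ih hk)

lemma gfDim_le_iff (M : ModuleCat.{u} S) (k : ℕ) :
    gfDim S M ≤ (k : ℕ∞) ↔ gfdLE S k M := by
  constructor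
  · intro h
    by_contra hn
    have hall : ∀ n ∈ {n : ℕ∞ | ∃ k' : ℕ, n = k' ∧ gfdLE S k' M}, (k : ℕ∞) + 1 ≤ n := by
      rintro n ⟨k', rfl, hk'⟩
      by_cases hle : k' ≤ k
      · exact absurd (gfdLE_of_le hle M hk') hn
      · have h1 : k + 1 ≤ k' := Nat.succ_le_of_lt (not_le.mp hle)
        exact_mod_cast Nat.cast_le.mpr h1
    have h2 : (k : ℕ∞) + 1 ≤ gfDim S M := le_sInf hall
    have h3 : (k : ℕ∞) + 1 ≤ (k : ℕ∞) := h2.trans h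
    have h4 : ¬ ((k : ℕ∞) + 1 ≤ (k : ℕ∞)) := by
      exact_mod_cast Nat.not_succ_le_self k
    exact h4 h3
  · intro h
    exact sInf_le ⟨k, rfl, h⟩

lemma le_of_forall_nat {a b : ℕ∞} (h : ∀ k : ℕ, b ≤ (k : ℕ∞) → a ≤ (k : ℕ∞)) : a ≤ b := by
  induction b using ENat.recTopCoe with
  | top => exact le_top
  | coe k => exact h k le_rfl

end GfdLEMach

section Master
variable {m : ℕ} {R : Fin m → Type u} [∀ i, CommRing (R i)]

lemma gfdLE_prod_iff : ∀ (k : ℕ) (M : ModuleCat.{u} (∀ j, R j)),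
    gfdLE (∀ j, R j) k M ↔ ∀ i, gfdLE (R i) k (ModuleCat.of (R i) (Dn R i M))
  | 0, M => by
    constructor
    · intro h i
      exact ⟨cfrDn i M h.some⟩
    · intro h
      have hGF : IsGorensteinFlat (∀ j, R j) (∀ i, Up R i (Dn R i M)) :=
        ⟨cfrUp (fun i => ModuleCat.of (R i) (Dn R i M)) (fun i => (h i).some)⟩
      exact isGF_congr (decompose (M : Type u)).symm hGF
  | (k+1), M => by
    constructor
    · intro h i
      obtain ⟨G, f, surj, hGF, hker⟩ := h
      refine ⟨ModuleCat.of (R i) (Dn R i G), DnMap i f, DnMap_surjective i f surj,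
        ⟨cfrDn i G hGF.some⟩, ?_⟩
      have hIH := (gfdLE_prod_iff k (ModuleCat.of (∀ j, R j) (LinearMap.ker f))).mp hker i
      exact gfdLE_congr k _ _ (kerDnEquiv i f) hIH
    · intro h
      choose G f surj hGF hker using fun i => (gfdLE_succ_iff k _).mp (h i)
      refine ⟨ModuleCat.of (∀ j, R j) (∀ i, Up R i (G i)),
        (decompose (M : Type u)).symm.toLinearMap.comp (piUpMap f), ?_, ?_, ?_⟩
      · exact (decompose (M : Type u)).symm.surjective.comp (piUpMap_surjective f surj)
      · exact ⟨cfrUp G (fun i => (hGF i).some)⟩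
      · have hk : LinearMap.ker ((decompose (M : Type u)).symm.toLinearMap.comp (piUpMap f))
            = LinearMap.ker (piUpMap f) := by
          rw [LinearMap.ker_comp,
            LinearMap.ker_eq_bot.mpr (decompose (M : Type u)).symm.injective,
            Submodule.comap_bot]
        rw [hk]
        refine (gfdLE_prod_iff k
          (ModuleCat.of (∀ j, R j) (LinearMap.ker (piUpMap f)))).mpr fun i => ?_
        exact gfdLE_congr k _ _ (kerPiUpEquiv f i).symm (hker i)

end Master
/-- For a finite family of commutative rings, the weak Gorenstein global dimension of the
product ring is the supremum of the weak Gorenstein global dimensions of the factors. -/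
theorem stmt10 (m : ℕ) (R : Fin m → Type u) [∀ i, CommRing (R i)] :
    wGgldim (∀ i, R i) = ⨆ i, wGgldim (R i) := by
  refine le_antisymm ?_ ?_
  · refine iSup_le fun M => ?_
    refine le_of_forall_nat fun k hk => ?_
    refine (gfDim_le_iff M k).mpr ?_
    refine (gfdLE_prod_iff k M).mpr fun i => ?_
    refine (gfDim_le_iff (ModuleCat.of (R i) (Dn R i M)) k).mp ?_
    refine le_trans ?_ (le_trans (le_iSup (fun i => wGgldim (R i)) i) hk)
    exact le_iSup (fun A : ModuleCat.{u} (R i) => gfDim (R i) A)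
      (ModuleCat.of (R i) (Dn R i M))
  · refine iSup_le fun i => ?_
    refine iSup_le fun A => ?_
    have h1 : gfDim (R i) A ≤ gfDim (∀ j, R j)
        (ModuleCat.of (∀ j, R j) (Up R i A)) := by
      refine le_of_forall_nat fun k hk => ?_
      refine (gfDim_le_iff A k).mpr ?_
      have h2 := (gfdLE_prod_iff k (ModuleCat.of (∀ j, R j) (Up R i (A : Type u)))).mp
        ((gfDim_le_iff _ k).mp hk) i
      exact gfdLE_congr k _ A (upDnEquiv i (A : Type u)) h2
    exact h1.trans (le_iSup (fun M : ModuleCat.{u} (∀ j, R j) => gfDim (∀ j, R j) M)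
      (ModuleCat.of (∀ j, R j) (Up R i (A : Type u))))
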